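/- arXiv:1407.0693 — 3 statements merged into one kernel-verified Lean document; each statement's English description precedes it below -/
import Mathlib

section
/- For every integer n ≥ 2, the Hausdorff dimension of the space of pointed trees (X_n, d_n) is infinite: dim_H(X_n) = ∞. -/
open Filter
open scoped ENNReal

noncomputable section

namespace GraphTrees

/-- The word length of an element of a free group: the length of its reduced word. -/
def wlen {n : ℕ} (g : FreeGroup (Fin n)) : ℕ := (FreeGroup.toWord g).length

/-- `h` is a prefix of `g`. -/
def IsPref {n : ℕ} (h g : FreeGroup (Fin n)) : Prop :=
  wlen h + wlen (h⁻¹ * g) = wlen g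

/-- Vertex sets of infinite connected subtrees of the Cayley graph of the free group on
`n` generators which contain the identity: subsets containing `1`, infinite, and
prefix-closed. -/
def IsTree {n : ℕ} (S : Set (FreeGroup (Fin n))) : Prop :=
  1 ∈ S ∧ S.Infinite ∧ ∀ g ∈ S, ∀ h : FreeGroup (Fin n), IsPref h g → h ∈ S

/-- The space `X n` of pointed trees. -/
def X (n : ℕ) : Type := {S : Set (FreeGroup (Fin n)) // IsTree S}

variable {n : ℕ}

/-- The pattern `B_S(m)` of radius `m` of a pointed tree. -/
def ball (S : X n) (m : ℕ) : Set (FreeGroup (Fin n)) := {g ∈ S.1 | wlen g ≤ m}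

/-- The set of radii on which two pointed trees have the same pattern. -/
def agreeSet (S S' : X n) : Set ℕ := {m | ball S m = ball S' m}

/-- The ball metric on the space of pointed trees. -/
def tdist (S S' : X n) : ℝ :=
  letI := Classical.propDecidable (S = S')
  if S = S' then 0 else Real.exp (-((sSup (agreeSet S S') : ℕ) : ℝ))

theorem tdist_eq_of_ne {x y : X n} (h : x ≠ y) :
    tdist x y = Real.exp (-((sSup (agreeSet x y) : ℕ) : ℝ)) := by
  unfold tdist
  rw [if_neg h]

theorem ball_mono_eq {x y : X n} {k m : ℕ} (hkm : k ≤ m)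
    (h : ball x m = ball y m) : ball x k = ball y k := by
  ext g
  constructor
  · rintro ⟨hg, hlen⟩
    have hx : g ∈ ball x m := ⟨hg, hlen.trans hkm⟩
    rw [h] at hx
    exact ⟨hx.1, hlen⟩
  · rintro ⟨hg, hlen⟩
    have hy : g ∈ ball y m := ⟨hg, hlen.trans hkm⟩
    rw [← h] at hy
    exact ⟨hy.1, hlen⟩

theorem eq_of_agree_all {x y : X n} (h : ∀ m, ball x m = ball y m) : x = y := by
  apply Subtype.ext
  ext g
  constructor
  · intro hg
    have hx : g ∈ ball x (wlen g) := ⟨hg, le_rfl⟩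
    rw [h] at hx
    exact hx.1
  · intro hg
    have hy : g ∈ ball y (wlen g) := ⟨hg, le_rfl⟩
    rw [← h] at hy
    exact hy.1

theorem bddAbove_agreeSet {x y : X n} (h : x ≠ y) : BddAbove (agreeSet x y) := by
  by_contra hb
  refine h (eq_of_agree_all fun m => ?_)
  rcases not_bddAbove_iff.mp hb m with ⟨k, hk, hmk⟩
  exact ball_mono_eq hmk.le hk

theorem ball_zero (x : X n) : ball x 0 = {1} := by
  ext g
  simp only [ball, Set.mem_setOf_eq, Nat.le_zero, Set.mem_singleton_iff]
  constructor
  · rintro ⟨hg, hlen⟩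
    exact FreeGroup.toWord_eq_nil_iff.mp (List.length_eq_zero_iff.mp hlen)
  · rintro rfl
    exact ⟨x.2.1, by simp [wlen]⟩

theorem zero_mem_agreeSet (x y : X n) : (0 : ℕ) ∈ agreeSet x y := by
  show ball x 0 = ball y 0
  rw [ball_zero, ball_zero]

theorem tdist_nonneg (x y : X n) : 0 ≤ tdist x y := by
  rcases eq_or_ne x y with rfl | h
  · unfold tdist
    rw [if_pos rfl]
  · rw [tdist_eq_of_ne h]
    exact (Real.exp_pos _).le

theorem tdist_self (x : X n) : tdist x x = 0 := by
  unfold tdist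
  rw [if_pos rfl]

theorem tdist_comm (x y : X n) : tdist x y = tdist y x := by
  by_cases h : x = y
  · subst h; rfl
  · have hs : agreeSet x y = agreeSet y x := by
      ext m
      exact eq_comm
    rw [tdist_eq_of_ne h, tdist_eq_of_ne (Ne.symm h), hs]

theorem tdist_ultra (x y z : X n) : tdist x z ≤ max (tdist x y) (tdist y z) := by
  rcases eq_or_ne x z with rfl | hxz
  · exact le_max_of_le_left (by rw [tdist_self]; exact tdist_nonneg x y)
  rcases eq_or_ne x y with rfl | hxy
  · exact le_max_of_le_right le_rfl
  rcases eq_or_ne y z with rfl | hyz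
  · exact le_max_of_le_left le_rfl
  have hbxy := bddAbove_agreeSet hxy
  have hbyz := bddAbove_agreeSet hyz
  have hbxz := bddAbove_agreeSet hxz
  have hma : sSup (agreeSet x y) ∈ agreeSet x y :=
    Nat.sSup_mem ⟨0, zero_mem_agreeSet x y⟩ hbxy
  have hmb : sSup (agreeSet y z) ∈ agreeSet y z :=
    Nat.sSup_mem ⟨0, zero_mem_agreeSet y z⟩ hbyz
  have hmin : min (sSup (agreeSet x y)) (sSup (agreeSet y z)) ∈ agreeSet x z := by
    have h1 : ball x (min (sSup (agreeSet x y)) (sSup (agreeSet y z)))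
        = ball y (min (sSup (agreeSet x y)) (sSup (agreeSet y z))) :=
      ball_mono_eq (min_le_left _ _) hma
    have h2 : ball y (min (sSup (agreeSet x y)) (sSup (agreeSet y z)))
        = ball z (min (sSup (agreeSet x y)) (sSup (agreeSet y z))) :=
      ball_mono_eq (min_le_right _ _) hmb
    exact h1.trans h2
  have hle : min (sSup (agreeSet x y)) (sSup (agreeSet y z)) ≤ sSup (agreeSet x z) :=
    le_csSup hbxz hmin
  rw [tdist_eq_of_ne hxz, tdist_eq_of_ne hxy, tdist_eq_of_ne hyz]
  rcases le_total (sSup (agreeSet x y)) (sSup (agreeSet y z)) with hab | hab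
  · refine le_max_of_le_left (Real.exp_le_exp.mpr ?_)
    have h2 : ((sSup (agreeSet x y) : ℕ) : ℝ) ≤ ((sSup (agreeSet x z) : ℕ) : ℝ) := by
      exact_mod_cast (min_eq_left hab) ▸ hle
    linarith
  · refine le_max_of_le_right (Real.exp_le_exp.mpr ?_)
    have h2 : ((sSup (agreeSet y z) : ℕ) : ℝ) ≤ ((sSup (agreeSet x z) : ℕ) : ℝ) := by
      exact_mod_cast (min_eq_right hab) ▸ hle
    linarith

theorem tdist_triangle (x y z : X n) : tdist x z ≤ tdist x y + tdist y z :=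
  (tdist_ultra x y z).trans
    (max_le (le_add_of_nonneg_right (tdist_nonneg y z))
      (le_add_of_nonneg_left (tdist_nonneg x y)))

instance : MetricSpace (X n) where
  dist := tdist
  dist_self := tdist_self
  dist_comm := tdist_comm
  dist_triangle := tdist_triangle
  eq_of_dist_eq_zero := by
    intro x y h
    by_contra hne
    have h' : tdist x y = 0 := h
    rw [tdist_eq_of_ne hne] at h'
    exact (Real.exp_pos _).ne' h'

theorem dist_eq_tdist (x y : X n) : dist x y = tdist x y := rfl

/-- The translate `S · g` of a tree `S` by a vertex `g ∈ S`. -/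
def translate {n : ℕ} (S : Set (FreeGroup (Fin n))) (g : FreeGroup (Fin n)) :
    Set (FreeGroup (Fin n)) := (fun h => g⁻¹ * h) '' S

/-- The orbit `O(S) = {S · g : g ∈ S}` of a pointed tree under the pseudogroup action. -/
def orbit (S : X n) : Set (X n) := {S' | ∃ g ∈ S.1, S'.1 = translate S.1 g}

/-- A subset `Y ⊆ X n` is invariant under the pseudogroup action. -/
def Invariant (Y : Set (X n)) : Prop :=
  ∀ S ∈ Y, ∀ g ∈ S.1, ∀ S' : X n, S'.1 = translate S.1 g → S' ∈ Y

/-- `Λ(Z, m)`: the number of distinct patterns of radius `m` of trees in `Z`. -/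
def Lam (Z : Set (X n)) (m : ℕ) : ℕ := ((fun S => ball S m) '' Z).ncard

/-- The lower box dimension of a subset of the space of pointed trees. -/
def lowerBox (Z : Set (X n)) : ℝ≥0∞ :=
  Filter.liminf (fun m : ℕ => ENNReal.ofReal (Real.log (Lam Z m)) / (m : ℝ≥0∞)) Filter.atTop

/-- The upper box dimension of a subset of the space of pointed trees. -/
def upperBox (Z : Set (X n)) : ℝ≥0∞ :=
  Filter.limsup (fun m : ℕ => ENNReal.ofReal (Real.log (Lam Z m)) / (m : ℝ≥0∞)) Filter.atTop


/-! ### Auxiliary material for the main theorem -/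

theorem red_eq_of_length' {β : Type*} {L₁ L₂ : List (β × Bool)} (h : FreeGroup.Red L₁ L₂)
    (hl : L₂.length = L₁.length) : L₁ = L₂ :=
  (h.sublist.eq_of_length hl).symm

theorem toWord_take_of_isPref {h g : FreeGroup (Fin n)} (hp : IsPref h g) :
    FreeGroup.toWord h = (FreeGroup.toWord g).take (wlen h) := by
  have hg : g = FreeGroup.mk (h.toWord ++ (h⁻¹*g).toWord) := by
    rw [← FreeGroup.mul_mk, FreeGroup.mk_toWord, FreeGroup.mk_toWord]; group
  have h2 : g.toWord = FreeGroup.reduce (h.toWord ++ (h⁻¹*g).toWord) := by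
    conv_lhs => rw [hg]
    rw [FreeGroup.toWord_mk]
  have hlen : (FreeGroup.reduce (h.toWord ++ (h⁻¹*g).toWord)).length
      = (h.toWord ++ (h⁻¹*g).toWord).length := by
    rw [← h2, List.length_append]
    exact hp.symm
  have heq : h.toWord ++ (h⁻¹*g).toWord = g.toWord :=
    (red_eq_of_length' FreeGroup.reduce.red hlen).trans h2.symm
  rw [← heq, wlen]
  exact List.take_left.symm

theorem reduce_eq_self_of_allT {L : List (Fin n × Bool)} (h : ∀ p ∈ L, p.2 = true) :
    FreeGroup.reduce L = L := by
  induction L with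
  | nil => rfl
  | cons x l ih =>
    rw [FreeGroup.reduce.cons, ih (fun p hp => h p (List.mem_cons_of_mem _ hp))]
    cases l with
    | nil => rfl
    | cons y t =>
      have hx : x.2 = true := h x List.mem_cons_self
      have hy : y.2 = true := h y (List.mem_cons_of_mem _ List.mem_cons_self)
      simp [hx, hy]

/-- first generator letter -/
def gA (hn : 2 ≤ n) : Fin n × Bool := (⟨0, by omega⟩, true)
/-- second generator letter -/
def gB (hn : 2 ≤ n) : Fin n × Bool := (⟨1, by omega⟩, true)

theorem gA_ne_gB (hn : 2 ≤ n) : gA hn ≠ gB hn := by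
  simp [gA, gB, Prod.ext_iff, Fin.ext_iff]

def spineW (hn : 2 ≤ n) (m : ℕ) : List (Fin n × Bool) := List.replicate m (gA hn)

def branchW (hn : 2 ≤ n) (j s : ℕ) : List (Fin n × Bool) :=
  List.replicate j (gA hn) ++ gB hn :: List.replicate s (gA hn)

def markW (hn : 2 ≤ n) (i j : ℕ) : List (Fin n × Bool) := branchW hn j i ++ [gB hn]

theorem allT_spineW (hn : 2 ≤ n) (m : ℕ) : ∀ p ∈ spineW hn m, p.2 = true := by
  intro p hp
  rw [spineW, List.mem_replicate] at hp
  rw [hp.2, gA]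

theorem allT_branchW (hn : 2 ≤ n) (j s : ℕ) : ∀ p ∈ branchW hn j s, p.2 = true := by
  intro p hp
  rw [branchW, List.mem_append, List.mem_cons] at hp
  rcases hp with hp | hp | hp
  · rw [(List.mem_replicate.1 hp).2, gA]
  · rw [hp, gB]
  · rw [(List.mem_replicate.1 hp).2, gA]

theorem allT_markW (hn : 2 ≤ n) (i j : ℕ) : ∀ p ∈ markW hn i j, p.2 = true := by
  intro p hp
  rw [markW, List.mem_append] at hp
  rcases hp with hp | hp
  · exact allT_branchW hn j i p hp
  · rw [List.mem_singleton.1 hp, gB]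

theorem toWord_spineW (hn : 2 ≤ n) (m : ℕ) :
    (FreeGroup.mk (spineW hn m)).toWord = spineW hn m := by
  rw [FreeGroup.toWord_mk, reduce_eq_self_of_allT (allT_spineW hn m)]

theorem toWord_branchW (hn : 2 ≤ n) (j s : ℕ) :
    (FreeGroup.mk (branchW hn j s)).toWord = branchW hn j s := by
  rw [FreeGroup.toWord_mk, reduce_eq_self_of_allT (allT_branchW hn j s)]

theorem toWord_markW (hn : 2 ≤ n) (i j : ℕ) :
    (FreeGroup.mk (markW hn i j)).toWord = markW hn i j := by
  rw [FreeGroup.toWord_mk, reduce_eq_self_of_allT (allT_markW hn i j)]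

theorem length_branchW (hn : 2 ≤ n) (j s : ℕ) : (branchW hn j s).length = j + s + 1 := by
  simp [branchW]; omega

theorem length_markW (hn : 2 ≤ n) (i j : ℕ) : (markW hn i j).length = j + i + 2 := by
  simp [markW, branchW]; omega

theorem wlen_markW (hn : 2 ≤ n) (i j : ℕ) :
    wlen (FreeGroup.mk (markW hn i j)) = j + i + 2 := by
  rw [wlen, toWord_markW, length_markW]

theorem count_spineW (hn : 2 ≤ n) (m : ℕ) : (spineW hn m).count (gB hn) = 0 := by
  rw [spineW, List.count_eq_zero]
  intro hmem
  exact gA_ne_gB hn ((List.mem_replicate.1 hmem).2).symm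

theorem count_branchW (hn : 2 ≤ n) (j s : ℕ) : (branchW hn j s).count (gB hn) = 1 := by
  have h1 := count_spineW hn j
  have h2 := count_spineW hn s
  simp only [spineW] at h1 h2
  simp [branchW, List.count_append, List.count_cons, h1, h2]

theorem count_markW (hn : 2 ≤ n) (i j : ℕ) : (markW hn i j).count (gB hn) = 2 := by
  simp [markW, List.count_append, count_branchW hn j i]

theorem mk_word_inj {L L' : List (Fin n × Bool)} (hL : ∀ p ∈ L, p.2 = true)
    (hL' : ∀ p ∈ L', p.2 = true) (h : FreeGroup.mk L = FreeGroup.mk L') : L = L' := by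
  have := congrArg FreeGroup.toWord h
  rwa [FreeGroup.toWord_mk, FreeGroup.toWord_mk, reduce_eq_self_of_allT hL,
    reduce_eq_self_of_allT hL'] at this

theorem repl_cons_inj {β : Type*} {x y : β} (hxy : x ≠ y) :
    ∀ (j j' : ℕ) (t t' : List β), List.replicate j x ++ y :: t = List.replicate j' x ++ y :: t' →
      j = j' ∧ t = t' := by
  intro j
  induction j with
  | zero =>
    intro j' t t' h
    cases j' with
    | zero => simpa using h
    | succ j' =>
      rw [List.replicate_succ] at h
      simp only [List.replicate_zero, List.nil_append, List.cons_append,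
        List.cons.injEq] at h
      exact absurd h.1 (Ne.symm hxy)
  | succ j ih =>
    intro j' t t' h
    cases j' with
    | zero =>
      rw [List.replicate_succ] at h
      simp only [List.replicate_zero, List.nil_append, List.cons_append,
        List.cons.injEq] at h
      exact absurd h.1.symm (Ne.symm hxy)
    | succ j' =>
      rw [List.replicate_succ, List.replicate_succ] at h
      simp only [List.cons_append, List.cons.injEq, true_and] at h
      obtain ⟨h1, h2⟩ := ih j' t t' h
      exact ⟨by omega, h2⟩

theorem markW_inj (hn : 2 ≤ n) {i j i' j' : ℕ} (h : markW hn i j = markW hn i' j') :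
    i = i' ∧ j = j' := by
  simp only [markW, branchW, List.append_assoc, List.cons_append] at h
  obtain ⟨h1, h2⟩ := repl_cons_inj (gA_ne_gB hn) _ _ _ _ h
  have := congrArg List.length h2
  simp at this
  exact ⟨this, h1⟩

/-- The tree encoding digits `b`. -/
def TS (hn : 2 ≤ n) (k : ℕ) (b : Fin k → ℕ → Bool) : Set (FreeGroup (Fin n)) :=
  {g | (∃ m, g = FreeGroup.mk (spineW hn m)) ∨ (∃ j s, g = FreeGroup.mk (branchW hn j s)) ∨
       (∃ i j, ∃ h : i < k, b ⟨i, h⟩ j = true ∧ g = FreeGroup.mk (markW hn i j))}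

theorem spine_mem_TS (hn : 2 ≤ n) (k : ℕ) (b : Fin k → ℕ → Bool) (m : ℕ) :
    FreeGroup.mk (spineW hn m) ∈ TS hn k b := Or.inl ⟨m, rfl⟩

theorem mark_mem_TS_iff (hn : 2 ≤ n) (k : ℕ) (b : Fin k → ℕ → Bool) {i : ℕ} (hi : i < k)
    (j : ℕ) : FreeGroup.mk (markW hn i j) ∈ TS hn k b ↔ b ⟨i, hi⟩ j = true := by
  constructor
  · rintro (⟨m, hm⟩ | ⟨j', s', hjs⟩ | ⟨i', j', h', hb', heq⟩)
    · have := mk_word_inj (allT_markW hn i j) (allT_spineW hn m) hm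
      have hc := congrArg (List.count (gB hn)) this
      rw [count_markW, count_spineW] at hc
      omega
    · have := mk_word_inj (allT_markW hn i j) (allT_branchW hn j' s') hjs
      have hc := congrArg (List.count (gB hn)) this
      rw [count_markW, count_branchW] at hc
      omega
    · have := mk_word_inj (allT_markW hn i j) (allT_markW hn i' j') heq
      obtain ⟨hii, hjj⟩ := markW_inj hn this
      subst hii hjj
      exact hb'
  · intro hb
    exact Or.inr (Or.inr ⟨i, j, hi, hb, rfl⟩)

theorem take_branchW (hn : 2 ≤ n) (j s t : ℕ) :
    (∃ m, (branchW hn j s).take t = spineW hn m) ∨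
    (∃ u, (branchW hn j s).take t = branchW hn j u) := by
  rw [branchW, List.take_append, List.take_replicate, List.length_replicate]
  by_cases ht : t ≤ j
  · left
    refine ⟨min t j, ?_⟩
    have : t - j = 0 := by omega
    rw [this, List.take_zero, List.append_nil, spineW]
  · right
    have hj : min t j = j := by omega
    have ht' : t - j = (t - j - 1) + 1 := by omega
    rw [hj, ht', List.take_succ_cons, List.take_replicate]
    exact ⟨min (t - j - 1) s, rfl⟩

theorem take_markW (hn : 2 ≤ n) (i j t : ℕ) :
    (∃ m, (markW hn i j).take t = spineW hn m) ∨
    (∃ u, (markW hn i j).take t = branchW hn j u) ∨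
    ((markW hn i j).take t = markW hn i j) := by
  rw [markW]
  by_cases ht : t ≤ (branchW hn j i).length
  · rw [List.take_append_of_le_length ht]
    rcases take_branchW hn j i t with ⟨m, hm⟩ | ⟨u, hu⟩
    · exact Or.inl ⟨m, hm⟩
    · exact Or.inr (Or.inl ⟨u, hu⟩)
  · right; right
    rw [List.take_of_length_le]
    simp only [List.length_append, List.length_cons, List.length_nil]
    omega

theorem isTree_TS (hn : 2 ≤ n) (k : ℕ) (b : Fin k → ℕ → Bool) : IsTree (TS hn k b) := by
  refine ⟨?_, ?_, ?_⟩
  · have h0 : (1 : FreeGroup (Fin n)) = FreeGroup.mk (spineW hn 0) := by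
      rw [spineW, List.replicate_zero]
      exact FreeGroup.one_eq_mk
    exact Or.inl ⟨0, h0⟩
  · refine Set.infinite_of_injective_forall_mem
      (f := fun m : ℕ => FreeGroup.mk (spineW hn m)) ?_ ?_
    · intro a b' hab
      have h1 := mk_word_inj (allT_spineW hn a) (allT_spineW hn b') hab
      have h2 := congrArg List.length h1
      simpa [spineW] using h2
    · exact fun m => spine_mem_TS hn k b m
  · rintro g hg h hp
    have hh : h = FreeGroup.mk ((FreeGroup.toWord g).take (wlen h)) := by
      rw [← toWord_take_of_isPref hp, FreeGroup.mk_toWord]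
    set t := wlen h
    rcases hg with ⟨m, hm⟩ | ⟨j, s, hjs⟩ | ⟨i, j, hik, hb, heq⟩
    · subst hm
      rw [toWord_spineW, spineW, List.take_replicate] at hh
      exact hh ▸ spine_mem_TS hn k b _
    · subst hjs
      rw [toWord_branchW] at hh
      rcases take_branchW hn j s t with ⟨m, hm⟩ | ⟨u, hu⟩
      · rw [hm] at hh
        exact hh ▸ spine_mem_TS hn k b _
      · rw [hu] at hh
        exact hh ▸ Or.inr (Or.inl ⟨j, u, rfl⟩)
    · subst heq
      rw [toWord_markW] at hh
      rcases take_markW hn i j t with ⟨m, hm⟩ | ⟨u, hu⟩ | hfull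
      · rw [hm] at hh
        exact hh ▸ spine_mem_TS hn k b _
      · rw [hu] at hh
        exact hh ▸ Or.inr (Or.inl ⟨j, u, rfl⟩)
      · rw [hfull] at hh
        exact hh ▸ Or.inr (Or.inr ⟨i, j, hik, hb, rfl⟩)

theorem summable_geo_aux : Summable (fun j : ℕ => (2⁻¹:ℝ)^(j+1)) := by
  simpa [pow_succ] using
    (summable_geometric_of_lt_one (by norm_num) (by norm_num : (2⁻¹:ℝ) < 1)).mul_right 2⁻¹

theorem tsum_geo_aux : ∑' j : ℕ, (2⁻¹:ℝ)^(j+1) = 1 := by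
  have h : ∑' j : ℕ, (2⁻¹:ℝ)^j = 2 := by
    rw [tsum_geometric_of_lt_one (by norm_num) (by norm_num)]
    norm_num
  calc ∑' j : ℕ, (2⁻¹:ℝ)^(j+1) = ∑' j : ℕ, 2⁻¹ * (2⁻¹:ℝ)^j := by
        congr 1; funext j; rw [pow_succ]; ring
    _ = 2⁻¹ * ∑' j : ℕ, (2⁻¹:ℝ)^j := tsum_mul_left
    _ = 1 := by rw [h]; norm_num

open scoped Classical in
/-- The digit summand read off from a subset. -/
def dF (hn : 2 ≤ n) (S : Set (FreeGroup (Fin n))) (i j : ℕ) : ℝ :=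
  if FreeGroup.mk (markW hn i j) ∈ S then (2⁻¹:ℝ)^(j+1) else 0

theorem dF_nonneg (hn : 2 ≤ n) (S : Set (FreeGroup (Fin n))) (i j : ℕ) : 0 ≤ dF hn S i j := by
  rw [dF]; split <;> positivity

theorem dF_le (hn : 2 ≤ n) (S : Set (FreeGroup (Fin n))) (i j : ℕ) :
    dF hn S i j ≤ (2⁻¹:ℝ)^(j+1) := by
  rw [dF]; split
  · exact le_rfl
  · positivity

theorem summable_dF (hn : 2 ≤ n) (S : Set (FreeGroup (Fin n))) (i : ℕ) :
    Summable (dF hn S i) :=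
  Summable.of_nonneg_of_le (dF_nonneg hn S i) (dF_le hn S i) summable_geo_aux

/-- The Hölder map to `ℝ^k`. -/
def gmap (hn : 2 ≤ n) (k : ℕ) (S : X n) : Fin k → ℝ := fun i => ∑' j, dF hn S.1 i.1 j

theorem gmap_comp_bound (hn : 2 ≤ n) {k : ℕ} {S S' : X n} {M : ℕ}
    (hb : ball S M = ball S' M) (i : Fin k) :
    |gmap hn k S i - gmap hn k S' i| ≤ 2^(k+1) * (2⁻¹:ℝ)^M := by
  set N := M - (k+1) with hN
  have hagree : ∀ j, j < N → dF hn S.1 i.1 j = dF hn S'.1 i.1 j := by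
    intro j hj
    have hw : wlen (FreeGroup.mk (markW hn i.1 j)) ≤ M := by
      rw [wlen_markW]
      have := i.2
      omega
    have hmem : FreeGroup.mk (markW hn i.1 j) ∈ S.1 ↔ FreeGroup.mk (markW hn i.1 j) ∈ S'.1 := by
      constructor
      · intro hs
        have : FreeGroup.mk (markW hn i.1 j) ∈ ball S M := ⟨hs, hw⟩
        rw [hb] at this
        exact this.1
      · intro hs
        have : FreeGroup.mk (markW hn i.1 j) ∈ ball S' M := ⟨hs, hw⟩
        rw [← hb] at this
        exact this.1
    rw [dF, dF]
    by_cases hc : FreeGroup.mk (markW hn i.1 j) ∈ S.1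
    · rw [if_pos hc, if_pos (hmem.1 hc)]
    · rw [if_neg hc, if_neg (fun hc' => hc (hmem.2 hc'))]
  set a : ℕ → ℝ := fun j => dF hn S.1 i.1 j - dF hn S'.1 i.1 j with ha
  set h : ℕ → ℝ := fun j => if j < N then 0 else (2⁻¹:ℝ)^(j+1) with hh
  have hsum_h : Summable h := by
    refine Summable.of_nonneg_of_le (fun j => ?_) (fun j => ?_) summable_geo_aux
    · rw [hh]; dsimp only; split <;> positivity
    · rw [hh]; dsimp only; split
      · positivity
      · exact le_rfl
  have habs : ∀ j, |a j| ≤ h j := by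
    intro j
    rw [ha, hh]
    dsimp only
    by_cases hj : j < N
    · rw [if_pos hj, hagree j hj, sub_self, abs_zero]
    · rw [if_neg hj]
      have h1 := dF_nonneg hn S.1 i.1 j
      have h2 := dF_nonneg hn S'.1 i.1 j
      have h3 := dF_le hn S.1 i.1 j
      have h4 := dF_le hn S'.1 i.1 j
      rw [abs_le]
      constructor <;> linarith
  have hsum_abs : Summable (fun j => |a j|) :=
    Summable.of_nonneg_of_le (fun j => abs_nonneg _) habs hsum_h
  have h1 : |gmap hn k S i - gmap hn k S' i| ≤ ∑' j, |a j| := by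
    rw [gmap, gmap]
    rw [← Summable.tsum_sub (summable_dF hn S.1 i.1) (summable_dF hn S'.1 i.1)]
    calc |∑' j, a j| = ‖∑' j, a j‖ := (Real.norm_eq_abs _).symm
      _ ≤ ∑' j, ‖a j‖ := norm_tsum_le_tsum_norm (by simpa [Real.norm_eq_abs] using hsum_abs)
      _ = ∑' j, |a j| := by simp [Real.norm_eq_abs]
  have h2 : ∑' j, |a j| ≤ ∑' j, h j := Summable.tsum_le_tsum habs hsum_abs hsum_h
  have h3 : ∑' j, h j = (2⁻¹:ℝ)^N := by
    have hsplit := Summable.sum_add_tsum_nat_add (f := h) N hsum_h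
    have hzero : ∑ j ∈ Finset.range N, h j = 0 := by
      refine Finset.sum_eq_zero fun j hj => ?_
      rw [hh]
      exact if_pos (Finset.mem_range.1 hj)
    have htail : ∑' j, h (j + N) = (2⁻¹:ℝ)^N := by
      have : ∀ j : ℕ, h (j + N) = (2⁻¹:ℝ)^N * (2⁻¹:ℝ)^(j+1) := by
        intro j
        rw [hh]
        dsimp only
        rw [if_neg (by omega), ← pow_add]
        congr 1
        omega
      rw [tsum_congr this, tsum_mul_left, tsum_geo_aux, mul_one]
    rw [← hsplit, hzero, htail, zero_add]
  have h4 : (2⁻¹:ℝ)^N ≤ 2^(k+1) * (2⁻¹:ℝ)^M := by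
    have hMN : (2:ℝ)^M ≤ 2^(k+1) * 2^N := by
      rw [← pow_add]
      exact pow_le_pow_right₀ (by norm_num) (by omega)
    have hMM : (2:ℝ)^M * (2⁻¹:ℝ)^M = 1 := by
      rw [← mul_pow]; norm_num
    have hNN : (2:ℝ)^N * (2⁻¹:ℝ)^N = 1 := by
      rw [← mul_pow]; norm_num
    calc (2⁻¹:ℝ)^N = ((2:ℝ)^M * (2⁻¹:ℝ)^M) * (2⁻¹:ℝ)^N := by rw [hMM, one_mul]
      _ = (2:ℝ)^M * ((2⁻¹:ℝ)^M * (2⁻¹:ℝ)^N) := by ring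
      _ ≤ (2^(k+1) * 2^N) * ((2⁻¹:ℝ)^M * (2⁻¹:ℝ)^N) :=
          mul_le_mul_of_nonneg_right hMN (by positivity)
      _ = 2^(k+1) * (2⁻¹:ℝ)^M * ((2:ℝ)^N * (2⁻¹:ℝ)^N) := by ring
      _ = 2^(k+1) * (2⁻¹:ℝ)^M := by rw [hNN, mul_one]
  linarith

/-- binary digit of `y` at position `j` (value `2 ^ (-j-1)`). -/
def bdig (y : ℝ) (j : ℕ) : Bool := decide (⌊y * 2^(j+1)⌋ = 2*⌊y * 2^j⌋ + 1)

theorem floor_double (t : ℝ) : ⌊2*t⌋ = 2*⌊t⌋ ∨ ⌊2*t⌋ = 2*⌊t⌋+1 := by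
  have h1 : 2*⌊t⌋ ≤ ⌊2*t⌋ := Int.le_floor.2 (by push_cast; linarith [Int.floor_le t])
  have h2 : ⌊2*t⌋ < 2*⌊t⌋+2 := Int.floor_lt.2 (by push_cast; linarith [Int.lt_floor_add_one t])
  omega

theorem bdig_partial_sum {y : ℝ} (hy : 0 ≤ y) (hy1 : y < 1) (N : ℕ) :
    ∑ j ∈ Finset.range N, (if bdig y j then (2⁻¹:ℝ)^(j+1) else 0) = (⌊y*2^N⌋:ℝ)/2^N := by
  induction N with
  | zero =>
    have : ⌊y⌋ = 0 := Int.floor_eq_zero_iff.2 ⟨hy, hy1⟩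
    simp [this]
  | succ N ih =>
    rw [Finset.sum_range_succ, ih]
    have harg : y * 2^(N+1) = 2*(y*2^N) := by ring
    rcases floor_double (y*2^N) with hd | hd
    · have hb : bdig y N = false := by
        simp only [bdig, harg, hd, decide_eq_false_iff_not]
        omega
      rw [hb, if_neg (by simp), harg, hd]
      push_cast
      ring
    · have hb : bdig y N = true := by
        simp only [bdig, harg, hd, decide_eq_true_eq]
      rw [hb, if_pos rfl, harg, hd]
      push_cast
      rw [inv_pow, pow_succ]
      field_simp

theorem hasSum_bdig {y : ℝ} (hy : 0 ≤ y) (hy1 : y < 1) :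
    HasSum (fun j => if bdig y j then (2⁻¹:ℝ)^(j+1) else 0) y := by
  rw [hasSum_iff_tendsto_nat_of_nonneg (fun i => by positivity)]
  have heq : (fun N => ∑ j ∈ Finset.range N, (if bdig y j then (2⁻¹:ℝ)^(j+1) else 0))
      = fun N => (⌊y*2^N⌋:ℝ)/2^N := funext (bdig_partial_sum hy hy1)
  rw [heq]
  have hlow : Tendsto (fun N : ℕ => y - (2⁻¹:ℝ)^N) atTop (nhds y) := by
    have := tendsto_pow_atTop_nhds_zero_of_lt_one (by norm_num : (0:ℝ) ≤ 2⁻¹) (by norm_num)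
    simpa using tendsto_const_nhds.sub this
  refine tendsto_of_tendsto_of_tendsto_of_le_of_le hlow tendsto_const_nhds ?_ ?_
  · intro N
    have h1 : y*2^N - 1 < (⌊y*2^N⌋:ℝ) := by linarith [Int.lt_floor_add_one (y*2^N)]
    have h2 : (0:ℝ) < 2^N := by positivity
    show y - (2⁻¹:ℝ)^N ≤ (⌊y*2^N⌋:ℝ)/2^N
    have hip : (2⁻¹:ℝ)^N = (2^N)⁻¹ := inv_pow 2 N
    rw [hip, le_div_iff₀ h2]
    have : (2^N : ℝ) * (2^N)⁻¹ = 1 := mul_inv_cancel₀ (ne_of_gt h2)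
    nlinarith
  · intro N
    have h1 : (⌊y*2^N⌋:ℝ) ≤ y*2^N := Int.floor_le _
    have h2 : (0:ℝ) < 2^N := by positivity
    show (⌊y*2^N⌋:ℝ)/2^N ≤ y
    rw [div_le_iff₀ h2]
    linarith

theorem holder_gmap (hn : 2 ≤ n) (k : ℕ) :
    HolderWith (2^(k+1) : NNReal) (1/2 : NNReal) (gmap hn k) := by
  intro x y
  rcases eq_or_ne x y with rfl | hne
  · simp
  have hball : GraphTrees.ball x (sSup (agreeSet x y)) = GraphTrees.ball y (sSup (agreeSet x y)) :=
    Nat.sSup_mem ⟨0, zero_mem_agreeSet x y⟩ (bddAbove_agreeSet hne)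
  set M := sSup (agreeSet x y) with hM
  have hdistf : dist (gmap hn k x) (gmap hn k y) ≤ 2^(k+1) * (2⁻¹:ℝ)^M := by
    refine dist_pi_le_iff (by positivity) |>.2 fun i => ?_
    rw [Real.dist_eq]
    exact gmap_comp_bound hn hball i
  have hxy : dist x y = Real.exp (-(M:ℝ)) := by
    rw [dist_eq_tdist, tdist_eq_of_ne hne]
  have hreal : dist (gmap hn k x) (gmap hn k y) ≤ (2:ℝ)^(k+1) * Real.exp (-(M:ℝ)/2) := by
    refine hdistf.trans (mul_le_mul_of_nonneg_left ?_ (by positivity))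
    have hpow : (2⁻¹:ℝ)^M = Real.exp ((M:ℝ) * Real.log 2⁻¹) := by
      rw [Real.exp_nat_mul, Real.exp_log (by norm_num : (0:ℝ) < 2⁻¹)]
    rw [hpow, Real.log_inv, Real.exp_le_exp]
    have hlog := Real.log_two_gt_d9
    have hM0 : (0:ℝ) ≤ (M:ℝ) := Nat.cast_nonneg M
    nlinarith
  rw [edist_dist, edist_dist, hxy]
  have hC : ((2^(k+1) : NNReal) : ℝ≥0∞) = ENNReal.ofReal ((2:ℝ)^(k+1)) := by
    rw [ENNReal.ofReal_pow (by norm_num)]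
    simp [ENNReal.ofReal_ofNat]
  have hpow2 : ENNReal.ofReal (Real.exp (-(M:ℝ))) ^ ((1/2 : NNReal) : ℝ)
      = ENNReal.ofReal (Real.exp (-(M:ℝ)/2)) := by
    rw [ENNReal.ofReal_rpow_of_pos (Real.exp_pos _)]
    congr 1
    rw [Real.rpow_def_of_pos (Real.exp_pos _), Real.log_exp]
    congr 1
    push_cast
    ring
  rw [hpow2, hC, ← ENNReal.ofReal_mul (by positivity)]
  exact ENNReal.ofReal_le_ofReal hreal

theorem pi_subset_gmap_image (hn : 2 ≤ n) (k : ℕ) :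
    (Set.univ.pi fun _ : Fin k => Set.Ico (0:ℝ) 1) ⊆ gmap hn k '' Set.univ := by
  intro x hx
  set b : Fin k → ℕ → Bool := fun i j => bdig (x i) j with hbdef
  refine ⟨⟨TS hn k b, isTree_TS hn k b⟩, Set.mem_univ _, ?_⟩
  funext i
  show ∑' j, dF hn (TS hn k b) i.1 j = x i
  have hx_i : x i ∈ Set.Ico (0:ℝ) 1 := hx i (Set.mem_univ _)
  have hsum := hasSum_bdig hx_i.1 hx_i.2
  rw [← hsum.tsum_eq]
  refine tsum_congr fun j => ?_
  rw [dF]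
  by_cases hmem : b i j = true
  · rw [if_pos ((mark_mem_TS_iff hn k b i.2 j).2 (by simpa using hmem)),
      if_pos (by simpa [hbdef] using hmem)]
  · rw [if_neg (fun hc => hmem (by simpa using (mark_mem_TS_iff hn k b i.2 j).1 hc)),
      if_neg (fun hc => hmem (by simpa [hbdef] using hc))]

/-- For every integer `n ≥ 2`, the Hausdorff dimension of the space of pointed trees
`(X_n, d_n)` is infinite. -/
theorem dimH_X_eq_top (n : ℕ) (hn : 2 ≤ n) :
    dimH (Set.univ : Set (X n)) = ⊤ := by
  have key : ∀ k : ℕ, (k : ℝ≥0∞) ≤ 2 * dimH (Set.univ : Set (X n)) := by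
    intro k
    have h1 : dimH (gmap hn k '' Set.univ) ≤
        dimH (Set.univ : Set (X n)) / ((1/2 : NNReal) : ℝ≥0∞) :=
      (holder_gmap hn k).dimH_image_le (by norm_num) _
    have hmemn : (Set.univ.pi fun _ : Fin k => Set.Ico (0:ℝ) 1) ∈
        nhds (fun _ : Fin k => (1/2 : ℝ)) := by
      refine mem_nhds_iff.2 ⟨Set.univ.pi fun _ : Fin k => Set.Ioo (0:ℝ) 1, ?_, ?_, ?_⟩
      · exact Set.pi_mono fun i _ => Set.Ioo_subset_Ico_self
      · exact isOpen_set_pi Set.finite_univ fun _ _ => isOpen_Ioo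
      · intro i _
        norm_num
    have h2 : (k : ℝ≥0∞) = dimH (Set.univ.pi fun _ : Fin k => Set.Ico (0:ℝ) 1) := by
      rw [Real.dimH_of_mem_nhds hmemn, Module.finrank_fin_fun]
    have h3 : dimH (Set.univ.pi fun _ : Fin k => Set.Ico (0:ℝ) 1) ≤
        dimH (gmap hn k '' Set.univ) := dimH_mono (pi_subset_gmap_image hn k)
    have h4 : dimH (Set.univ : Set (X n)) / ((1/2 : NNReal) : ℝ≥0∞)
        = 2 * dimH (Set.univ : Set (X n)) := by
      have hc : ((1/2 : NNReal) : ℝ≥0∞) = 2⁻¹ := by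
        simp
      rw [hc, div_eq_mul_inv, inv_inv, mul_comm]
    rw [h4] at h1
    exact h2 ▸ (h3.trans h1)
  by_contra htop
  have hfin : 2 * dimH (Set.univ : Set (X n)) ≠ ⊤ :=
    ENNReal.mul_ne_top (by norm_num) htop
  obtain ⟨k, hk⟩ := ENNReal.exists_nat_gt hfin
  exact hk.not_ge (key k)

end GraphTrees
end
end

section
/- For every integer n ≥ 2 and every natural number N, there is no bi-Lipschitz map from (X_n, d_n) into Euclidean space ℝ^N; that is, there is no map φ : X_n → ℝ^N and constant K > 0 such that (1/K)·d_n(S, S') ≤ ‖φ(S) − φ(S')‖ ≤ K·d_n(S, S') for all S, S' ∈ X_n. -/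
open Filter
open scoped ENNReal

noncomputable section

namespace GraphTrees

variable {n : ℕ}

theorem wlen_eq_norm (g : FreeGroup (Fin n)) : wlen g = FreeGroup.norm g := rfl

theorem wlen_mul_le (x y : FreeGroup (Fin n)) : wlen (x * y) ≤ wlen x + wlen y :=
  FreeGroup.norm_mul_le x y

theorem isPref_self (g : FreeGroup (Fin n)) : IsPref g g := by
  simp [IsPref, wlen, FreeGroup.toWord_one]

theorem IsPref.wlen_le {h g : FreeGroup (Fin n)} (hp : IsPref h g) : wlen h ≤ wlen g := by
  unfold IsPref at hp; omega

theorem IsPref.trans {k h g : FreeGroup (Fin n)} (hkh : IsPref k h) (hhg : IsPref h g) :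
    IsPref k g := by
  unfold IsPref at *
  have t1 : wlen (k⁻¹ * g) ≤ wlen (k⁻¹ * h) + wlen (h⁻¹ * g) := by
    have : k⁻¹ * g = (k⁻¹ * h) * (h⁻¹ * g) := by group
    rw [this]; exact wlen_mul_le _ _
  have t2 : wlen g ≤ wlen k + wlen (k⁻¹ * g) := by
    have : wlen g = wlen (k * (k⁻¹ * g)) := by rw [mul_inv_cancel_left]
    rw [this]; exact wlen_mul_le _ _
  omega

theorem IsPref.toWord_append {h g : FreeGroup (Fin n)} (hp : IsPref h g) :
    g.toWord = h.toWord ++ (h⁻¹ * g).toWord := by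
  have key := FreeGroup.toWord_mul_sublist h (h⁻¹ * g)
  rw [mul_inv_cancel_left] at key
  exact key.eq_of_length (by simpa [List.length_append, wlen] using hp.symm)


section Words
variable {A B : Fin n}

/-- The word `a^j b^s`. -/
def gw (A B : Fin n) (j s : ℕ) : FreeGroup (Fin n) :=
  FreeGroup.of A ^ j * FreeGroup.of B ^ s

theorem reduce_ab (hAB : A ≠ B) (j s : ℕ) :
    FreeGroup.reduce (List.replicate j (A, true) ++ List.replicate s (B, true)) =
      List.replicate j (A, true) ++ List.replicate s (B, true) := by
  induction j with
  | zero => simpa using FreeGroup.reduce_replicate s (B, true)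
  | succ j ih =>
    rw [List.replicate_succ, List.cons_append, FreeGroup.reduce.cons, ih]
    cases j with
    | zero =>
      cases s with
      | zero => simp
      | succ s => rw [List.replicate_succ]; simp [hAB]
    | succ j => rw [List.replicate_succ]; simp

theorem toWord_gw (hAB : A ≠ B) (j s : ℕ) :
    (gw A B j s).toWord = List.replicate j (A, true) ++ List.replicate s (B, true) := by
  have h1 : FreeGroup.of A ^ j = FreeGroup.mk (List.replicate j ((A : Fin n), true)) := by
    rw [← FreeGroup.toWord_of_pow A j, FreeGroup.mk_toWord]
  have h2 : FreeGroup.of B ^ s = FreeGroup.mk (List.replicate s ((B : Fin n), true)) := by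
    rw [← FreeGroup.toWord_of_pow B s, FreeGroup.mk_toWord]
  rw [gw, h1, h2, FreeGroup.mul_mk, FreeGroup.toWord_mk, reduce_ab hAB]

theorem wlen_gw (hAB : A ≠ B) (j s : ℕ) : wlen (gw A B j s) = j + s := by
  rw [wlen, toWord_gw hAB]; simp

theorem gw_not_pref (hAB : A ≠ B) {m i j s : ℕ} (hj : j ≤ m) (hij : i ≠ j)
    (hp : IsPref (gw A B j (m + 1 - j)) (gw A B i s)) : False := by
  have hlen : m + 1 ≤ i + s := by
    have := hp.wlen_le
    rwa [wlen_gw hAB, wlen_gw hAB, show j + (m + 1 - j) = m + 1 by omega] at this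
  have heq := hp.toWord_append
  rw [toWord_gw hAB, toWord_gw hAB] at heq
  set R := ((gw A B j (m + 1 - j))⁻¹ * gw A B i s).toWord with hR
  rcases lt_or_gt_of_ne hij with hlt | hgt
  · -- i < j : position i is (B,true) on the left, (A,true) on the right
    have hL : (List.replicate i ((A : Fin n), true) ++ List.replicate s (B, true))[i]? =
        some (B, true) := by
      rw [List.getElem?_append_right (by simp)]
      simp only [List.length_replicate, Nat.sub_self, List.getElem?_replicate]
      rw [if_pos (by omega)]
    have hRs : (List.replicate j ((A : Fin n), true) ++
        List.replicate (m + 1 - j) (B, true) ++ R)[i]? = some (A, true) := by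
      rw [List.append_assoc, List.getElem?_append_left (by simpa using hlt),
        List.getElem?_replicate, if_pos hlt]
    rw [heq, hRs] at hL
    exact hAB (by injection hL with h1; injection h1)
  · -- j < i : position j is (A,true) on the left, (B,true) on the right
    have hL : (List.replicate i ((A : Fin n), true) ++ List.replicate s (B, true))[j]? =
        some (A, true) := by
      rw [List.getElem?_append_left (by simpa using hgt), List.getElem?_replicate, if_pos hgt]
    have hRs : (List.replicate j ((A : Fin n), true) ++
        List.replicate (m + 1 - j) (B, true) ++ R)[j]? = some (B, true) := by
      rw [List.append_assoc, List.getElem?_append_right (by simp)]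
      rw [List.getElem?_append_left (by simp; omega)]
      simp only [List.length_replicate, Nat.sub_self, List.getElem?_replicate]
      rw [if_pos (by omega)]
    rw [heq, hRs] at hL
    exact hAB (by injection hL with h1; injection h1 with h2 _; exact h2.symm)

end Words

section Trees
variable {A B : Fin n}

/-- The tree consisting of the full ball of radius `m` together with all prefixes of the
ray `a^j b^s`, `s ∈ ℕ`. -/
def Sset (A B : Fin n) (m j : ℕ) : Set (FreeGroup (Fin n)) :=
  {g | wlen g ≤ m} ∪ {h | ∃ s, IsPref h (gw A B j s)}

theorem isTree_Sset (hAB : A ≠ B) (m j : ℕ) : IsTree (Sset A B m j) := by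
  refine ⟨Or.inl (by simp [wlen, FreeGroup.toWord_one]), ?_, ?_⟩
  · apply Set.infinite_of_injective_forall_mem (f := fun s : ℕ => gw A B j s)
    · intro s s' h
      have := congrArg wlen h
      rw [wlen_gw hAB, wlen_gw hAB] at this
      omega
    · exact fun s => Or.inr ⟨s, isPref_self _⟩
  · rintro g (hg | ⟨s, hgs⟩) h hp
    · exact Or.inl (le_trans hp.wlen_le hg)
    · exact Or.inr ⟨s, hp.trans hgs⟩

/-- The tree `Sset A B m j` as a point of `X n`. -/
def Sx (hAB : A ≠ B) (m j : ℕ) : X n := ⟨Sset A B m j, isTree_Sset hAB m j⟩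

theorem gwj_mem (m j : ℕ) : gw A B j (m + 1 - j) ∈ Sset A B m j :=
  Or.inr ⟨m + 1 - j, isPref_self _⟩

theorem gwj_not_mem (hAB : A ≠ B) {m i j : ℕ} (hj : j ≤ m) (hij : i ≠ j) :
    gw A B j (m + 1 - j) ∉ Sset A B m i := by
  rintro (h | ⟨s, hp⟩)
  · rw [Set.mem_setOf_eq, wlen_gw hAB] at h
    omega
  · exact gw_not_pref hAB hj hij hp

theorem ball_Sx (hAB : A ≠ B) {m j k : ℕ} (hk : k ≤ m) :
    ball (Sx hAB m j) k = {g | wlen g ≤ k} := by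
  ext g
  constructor
  · rintro ⟨_, h2⟩; exact h2
  · intro h; exact ⟨Or.inl (le_trans h hk), h⟩

theorem tdist_Sx (hAB : A ≠ B) {m i j : ℕ} (hi : i ≤ m) (hj : j ≤ m) (hij : i ≠ j) :
    tdist (Sx hAB m i) (Sx hAB m j) = Real.exp (-(m : ℝ)) := by
  have hne : Sx hAB m i ≠ Sx hAB m j := by
    intro h
    apply gwj_not_mem hAB hj hij
    have : Sset A B m i = Sset A B m j := congrArg Subtype.val h
    rw [this]
    exact gwj_mem m j
  have hmem : m ∈ agreeSet (Sx hAB m i) (Sx hAB m j) := by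
    show ball _ m = ball _ m
    rw [ball_Sx hAB le_rfl, ball_Sx hAB le_rfl]
  have hnot : m + 1 ∉ agreeSet (Sx hAB m i) (Sx hAB m j) := by
    intro h
    have hmemj : gw A B j (m + 1 - j) ∈ ball (Sx hAB m j) (m + 1) :=
      ⟨gwj_mem m j, by rw [wlen_gw hAB]; omega⟩
    rw [← h] at hmemj
    exact gwj_not_mem hAB hj hij hmemj.1
  have hbound : ∀ k ∈ agreeSet (Sx hAB m i) (Sx hAB m j), k ≤ m := by
    intro k hk
    by_contra h
    exact hnot (ball_mono_eq (by omega) hk)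
  have hsup : sSup (agreeSet (Sx hAB m i) (Sx hAB m j)) = m :=
    le_antisymm (csSup_le ⟨0, zero_mem_agreeSet _ _⟩ hbound) (le_csSup ⟨m, hbound⟩ hmem)
  rw [tdist_eq_of_ne hne, hsup]

end Trees

/-- For every `n ≥ 2` and every `N`, there is no bi-Lipschitz map from `(X_n, d_n)`
into the Euclidean space `ℝ^N`. -/
theorem no_biLipschitz_into_euclidean (n : ℕ) (hn : 2 ≤ n) (N : ℕ) :
    ¬ ∃ (φ : X n → EuclideanSpace ℝ (Fin N)) (K : ℝ), 0 < K ∧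
      ∀ S S' : X n,
        (1 / K) * dist S S' ≤ ‖φ S - φ S'‖ ∧ ‖φ S - φ S'‖ ≤ K * dist S S' := by
  rintro ⟨φ, K, hK, hbl⟩
  have hε : (0 : ℝ) < 1 / (3 * K) := by positivity
  obtain ⟨t, htf, hcov⟩ :=
    (Metric.totallyBounded_iff.mp
      (isCompact_closedBall (0 : EuclideanSpace ℝ (Fin N)) K).totallyBounded) _ hε
  set m := htf.toFinset.card with hm
  have hAB : (⟨0, by omega⟩ : Fin n) ≠ (⟨1, by omega⟩ : Fin n) := by
    intro h
    simpa using congrArg Fin.val h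
  set y : ℕ → EuclideanSpace ℝ (Fin N) :=
    fun j => Real.exp m • (φ (Sx hAB m j) - φ (Sx hAB m 0)) with hy
  have hnorm : ∀ i j : ℕ,
      dist (y i) (y j) = Real.exp m * ‖φ (Sx hAB m i) - φ (Sx hAB m j)‖ := by
    intro i j
    rw [dist_eq_norm]
    have hyij : y i - y j = Real.exp m • (φ (Sx hAB m i) - φ (Sx hAB m j)) := by
      rw [hy, ← smul_sub]
      congr 1
      abel
    rw [hyij, norm_smul, Real.norm_eq_abs, abs_of_pos (Real.exp_pos _)]
  have hexp : Real.exp m * Real.exp (-(m : ℝ)) = 1 := by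
    rw [← Real.exp_add]
    simp
  have hsep : ∀ i j : ℕ, i ≤ m → j ≤ m → i ≠ j → 1 / K ≤ dist (y i) (y j) := by
    intro i j hi hj hij
    have hd := (hbl (Sx hAB m i) (Sx hAB m j)).1
    rw [dist_eq_tdist, tdist_Sx hAB hi hj hij] at hd
    rw [hnorm]
    calc 1 / K = Real.exp m * (1 / K * Real.exp (-(m : ℝ))) := by
          rw [show Real.exp m * (1 / K * Real.exp (-(m : ℝ)))
              = 1 / K * (Real.exp m * Real.exp (-(m : ℝ))) by ring, hexp, mul_one]
      _ ≤ Real.exp m * ‖φ (Sx hAB m i) - φ (Sx hAB m j)‖ :=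
          mul_le_mul_of_nonneg_left hd (Real.exp_pos _).le
  have hball : ∀ j : ℕ, j ≤ m → y j ∈ Metric.closedBall (0 : EuclideanSpace ℝ (Fin N)) K := by
    intro j hj
    rw [Metric.mem_closedBall, dist_zero_right]
    by_cases h0 : j = 0
    · subst h0
      simp only [hy, sub_self, smul_zero, norm_zero]
      exact hK.le
    · have hd := (hbl (Sx hAB m j) (Sx hAB m 0)).2
      rw [dist_eq_tdist, tdist_Sx hAB hj (Nat.zero_le m) h0] at hd
      have h1 : ‖y j‖ = Real.exp m * ‖φ (Sx hAB m j) - φ (Sx hAB m 0)‖ := by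
        rw [hy, norm_smul, Real.norm_eq_abs, abs_of_pos (Real.exp_pos _)]
      rw [h1]
      calc Real.exp m * ‖φ (Sx hAB m j) - φ (Sx hAB m 0)‖
          ≤ Real.exp m * (K * Real.exp (-(m : ℝ))) :=
            mul_le_mul_of_nonneg_left hd (Real.exp_pos _).le
        _ = K := by
            rw [show Real.exp m * (K * Real.exp (-(m : ℝ)))
                = K * (Real.exp m * Real.exp (-(m : ℝ))) by ring, hexp, mul_one]
  have hchoice : ∀ j : Fin (m + 1), ∃ c ∈ t, y j ∈ Metric.ball c (1 / (3 * K)) := by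
    intro j
    have hmem := hcov (hball j (by omega))
    simpa using hmem
  choose c hc1 hc2 using hchoice
  have h23 : 2 * (1 / (3 * K)) < 1 / K := by
    have h1 : (0 : ℝ) < 1 / K := by positivity
    have h2 : 2 * (1 / (3 * K)) = (2 / 3) * (1 / K) := by
      field_simp
    rw [h2]
    nlinarith
  have hinj : Function.Injective c := by
    intro i j hij
    by_contra hne
    have hvi : (i : ℕ) ≠ (j : ℕ) := fun h => hne (Fin.ext h)
    have h1 := Metric.mem_ball.mp (hc2 i)
    have h2 := Metric.mem_ball.mp (hc2 j)
    have hs := hsep i j (by omega) (by omega) hvi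
    have htri : dist (y (i : ℕ)) (y (j : ℕ)) ≤ dist (y (i : ℕ)) (c i) + dist (y (j : ℕ)) (c j) := by
      rw [hij]
      exact dist_triangle_right _ _ _
    linarith
  have hcard : m + 1 ≤ m := by
    have := Finset.card_le_card_of_injOn (s := (Finset.univ : Finset (Fin (m + 1))))
      (t := htf.toFinset) c (fun j _ => htf.mem_toFinset.mpr (hc1 j)) (hinj.injOn)
    simpa [hm] using this
  omega


end GraphTrees
end
end

section
/- The image Φ_α(Σ) ⊆ X_n of the shift space Σ satisfies 0 < dim_H(Φ_α(Σ)) < ∞, and moreover dim_H(Φ_α(Σ)) equals both the lower box dimension and the upper box dimension of Φ_α(Σ) in (X_n, d_n). -/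
open Filter
open scoped ENNReal

noncomputable section

namespace GraphTrees

variable {n : ℕ}

lemma reduce_map_range {β : Type*} [DecidableEq β] (b : Bool) :
    ∀ (k : ℕ) (f : ℕ → β),
      FreeGroup.reduce ((List.range k).map fun i => (f i, b)) =
        (List.range k).map fun i => (f i, b) := by
  intro k
  induction k with
  | zero => intro f; simp
  | succ k ih =>
    intro f
    have hr : List.range (k + 1) = 0 :: (List.range k).map Nat.succ :=
      List.range_succ_eq_map
    rw [hr]
    simp only [List.map_cons, List.map_map]
    have ih' := ih (fun i => f (Nat.succ i))
    have hcomp : ((fun i => (f i, b)) ∘ Nat.succ) = fun i => (f (Nat.succ i), b) := rfl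
    rw [hcomp, FreeGroup.reduce.cons, ih']
    cases k with
    | zero => simp
    | succ k =>
      rw [List.range_succ_eq_map]
      simp

lemma map_range_eq_iff {β : Type*} {t : ℕ} {f g : ℕ → β}
    (h : (List.range t).map f = (List.range t).map g) {i : ℕ} (hi : i < t) :
    f i = g i := by
  have h1 : ((List.range t).map f)[i]? = ((List.range t).map g)[i]? := by rw [h]
  simpa [List.getElem?_map, List.getElem?_range, hi] using h1

variable {n : ℕ} {A : Type*}

/-- The reduced word of the `k`-th vertex on the line determined by `σ`. -/
def W (α : A → Fin n) (σ : ℤ → A) (k : ℤ) : List (Fin n × Bool) :=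
  if 0 ≤ k then (List.range k.toNat).map fun i : ℕ => (α (σ (i : ℤ)), true)
  else (List.range (-k).toNat).map fun i : ℕ => (α (σ (-1 - (i : ℤ))), false)

lemma W_succ (α : A → Fin n) (σ : ℤ → A) (k : ℤ) (hk : 0 ≤ k) :
    W α σ (k + 1) = W α σ k ++ [(α (σ k), true)] := by
  unfold W
  rw [if_pos hk, if_pos (by omega : (0:ℤ) ≤ k + 1)]
  have h1 : (k + 1).toNat = k.toNat + 1 := by omega
  rw [h1, List.range_succ, List.map_append]
  simp only [List.map_cons, List.map_nil]
  have h2 : ((k.toNat : ℕ) : ℤ) = k := Int.toNat_of_nonneg hk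
  rw [h2]

lemma W_pred (α : A → Fin n) (σ : ℤ → A) (k : ℤ) (hk : k ≤ 0) :
    W α σ (k - 1) = W α σ k ++ [(α (σ (k - 1)), false)] := by
  unfold W
  rcases eq_or_lt_of_le hk with rfl | hk'
  · rw [if_neg (by omega), if_pos le_rfl]
    have h1 : (-(0 - 1) : ℤ).toNat = 1 := by omega
    rw [h1, List.range_succ, List.range_zero]
    norm_num
  · rw [if_neg (by omega), if_neg (by omega)]
    have h1 : (-(k - 1)).toNat = (-k).toNat + 1 := by omega
    rw [h1, List.range_succ, List.map_append]
    simp only [List.map_cons, List.map_nil]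
    have h2 : -1 - (((-k).toNat : ℕ) : ℤ) = k - 1 := by omega
    rw [h2]

lemma lam_eq_mk (α : A → Fin n) (σ : ℤ → A) (lam : ℤ → FreeGroup (Fin n))
    (h0 : lam 0 = 1) (hstep : ∀ k : ℤ, lam (k + 1) = lam k * FreeGroup.of (α (σ k))) :
    ∀ k : ℤ, lam k = FreeGroup.mk (W α σ k) := by
  intro k
  induction k using Int.induction_on with
  | zero => rw [h0]; simp [W, FreeGroup.one_eq_mk]
  | succ i ih =>
    rw [hstep i, ih, W_succ α σ i (Int.ofNat_nonneg i)]
    have hof : FreeGroup.of (α (σ i)) = FreeGroup.mk [(α (σ (i : ℤ)), true)] := rfl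
    rw [hof, FreeGroup.mul_mk]
  | pred i ih =>
    have hs := hstep (-(i : ℤ) - 1)
    rw [(by ring : (-(i : ℤ) - 1) + 1 = -(i : ℤ))] at hs
    have hlam : lam (-(i : ℤ) - 1) = lam (-(i : ℤ)) * (FreeGroup.of (α (σ (-(i : ℤ) - 1))))⁻¹ := by
      rw [hs]; group
    have hof : (FreeGroup.of (α (σ (-(i : ℤ) - 1))))⁻¹
        = FreeGroup.mk [(α (σ (-(i : ℤ) - 1)), false)] := by
      have h2 : FreeGroup.of (α (σ (-(i : ℤ) - 1)))
          = FreeGroup.mk [(α (σ (-(i : ℤ) - 1)), true)] := rfl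
      rw [h2, FreeGroup.inv_mk]; rfl
    rw [hlam, ih, hof, FreeGroup.mul_mk, W_pred α σ (-(i:ℤ)) (by omega)]

lemma toWord_lam (α : A → Fin n) (σ : ℤ → A) (lam : ℤ → FreeGroup (Fin n))
    (h0 : lam 0 = 1) (hstep : ∀ k : ℤ, lam (k + 1) = lam k * FreeGroup.of (α (σ k)))
    (k : ℤ) : (lam k).toWord = W α σ k := by
  rw [lam_eq_mk α σ lam h0 hstep k, FreeGroup.toWord_mk]
  unfold W
  split
  · exact reduce_map_range true _ _
  · exact reduce_map_range false _ _

lemma length_W (α : A → Fin n) (σ : ℤ → A) (k : ℤ) : (W α σ k).length = k.natAbs := by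
  unfold W
  split <;> rw [List.length_map, List.length_range] <;> omega


variable {A : Type*}

lemma tail_geom {b : ℕ} (hb : 2 ≤ b) (m : ℕ) :
    HasSum (fun j : ℕ => if j < m then (0:ℝ) else ((b:ℝ) - 1) * ((b:ℝ)⁻¹ ^ (j+1)))
      ((b:ℝ)⁻¹ ^ m) := by
  have hb1 : (1:ℝ) < b := by exact_mod_cast hb.trans_lt' one_lt_two
  have hb0 : (0:ℝ) < b := by linarith
  set r : ℝ := (b:ℝ)⁻¹ with hr
  have hr0 : 0 ≤ r := by positivity
  have hr1 : r < 1 := by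
    rw [hr, inv_lt_one_iff₀]; right; exact hb1
  have hgeo : HasSum (fun j : ℕ => ((b:ℝ) - 1) * r ^ (m+1) * r ^ j)
      (((b:ℝ) - 1) * r ^ (m+1) * (1 - r)⁻¹) :=
    (hasSum_geometric_of_lt_one hr0 hr1).mul_left _
  have hbne : (b:ℝ) ≠ 0 := by positivity
  have hb1ne : (b:ℝ) - 1 ≠ 0 := by linarith
  have hval : ((b:ℝ) - 1) * r ^ (m+1) * (1 - r)⁻¹ = r ^ m := by
    have h1 : (1 - (b:ℝ)⁻¹) = ((b:ℝ) - 1) / b := by field_simp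
    calc ((b:ℝ) - 1) * r ^ (m+1) * (1 - r)⁻¹
        = r ^ m * (((b:ℝ) - 1) * (r * (b:ℝ)) / ((b:ℝ) - 1)) := by
          rw [hr, h1, inv_div, pow_succ]; ring
      _ = r ^ m := by rw [hr, inv_mul_cancel₀ hbne, mul_one, div_self hb1ne, mul_one]
  rw [hval] at hgeo
  set h : ℕ → ℝ := fun j => if j < m then (0:ℝ) else ((b:ℝ) - 1) * (r ^ (j+1)) with hh
  have hshift : (fun j : ℕ => h (j + m)) = fun j : ℕ => ((b:ℝ) - 1) * r ^ (m+1) * r ^ j := by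
    funext j
    rw [hh]
    simp only [if_neg (by omega : ¬ (j + m < m))]
    rw [show j + m + 1 = (m + 1) + j by ring, pow_add]
    ring
  have hsum0 : ∑ i ∈ Finset.range m, h i = 0 :=
    Finset.sum_eq_zero fun i hi => if_pos (Finset.mem_range.1 hi)
  have := (hasSum_nat_add_iff' (f := h) m).1 (by rw [hshift, hsum0, sub_zero]; exact hgeo)
  exact this

section Dig
variable (c : ℕ) (e : A → ℕ)

/-- digits of the coding map -/
def dig (σ : ℤ → A) (j : ℕ) : ℕ := e (σ (-(j:ℤ) - 1)) * c + e (σ (j:ℤ))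

/-- the coding map to `ℝ` -/
noncomputable def F0 (σ : ℤ → A) : ℝ := ∑' j : ℕ, (dig c e σ j : ℝ) * (((c:ℝ)^2)⁻¹) ^ (j+1)

variable {c e}

lemma dig_lt (he : ∀ a, e a < c) (σ : ℤ → A) (j : ℕ) : dig c e σ j < c^2 := by
  have h1 := he (σ (-(j:ℤ) - 1))
  have h2 := he (σ (j:ℤ))
  calc dig c e σ j < e (σ (-(j:ℤ) - 1)) * c + c := by unfold dig; omega
    _ ≤ (c - 1) * c + c := by
        have : e (σ (-(j:ℤ) - 1)) ≤ c - 1 := by omega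
        exact Nat.add_le_add_right (Nat.mul_le_mul_right c this) c
    _ = ((c - 1) + 1) * c := by ring
    _ = c * c := by rw [Nat.sub_add_cancel (by omega : 1 ≤ c)]
    _ = c^2 := (pow_two c).symm

lemma summable_dig (hc : 2 ≤ c) (he : ∀ a, e a < c) (σ : ℤ → A) :
    Summable (fun j : ℕ => (dig c e σ j : ℝ) * (((c:ℝ)^2)⁻¹) ^ (j+1)) := by
  have hb : 2 ≤ c^2 := by nlinarith
  refine Summable.of_nonneg_of_le (fun j => by positivity) (fun j => ?_)
    ⟨_, tail_geom hb 0⟩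
  simp only [if_neg (by omega : ¬ (j < 0))]
  have h1 : (dig c e σ j : ℝ) ≤ ((c^2 : ℕ) : ℝ) - 1 := by
    have := dig_lt he σ j
    have : dig c e σ j ≤ c^2 - 1 := by omega
    have h2 : ((dig c e σ j : ℕ) : ℝ) ≤ ((c^2 - 1 : ℕ) : ℝ) := by exact_mod_cast this
    rw [Nat.cast_sub (by omega)] at h2
    simpa using h2
  have hpos : (0:ℝ) ≤ (((c:ℝ)^2)⁻¹) ^ (j+1) := by positivity
  push_cast at h1 ⊢
  exact mul_le_mul_of_nonneg_right h1 hpos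

lemma F0_diff (hc : 2 ≤ c) (he : ∀ a, e a < c) (σ τ : ℤ → A) (m : ℕ)
    (hagree : ∀ k : ℤ, -(m:ℤ) ≤ k → k < m → σ k = τ k) :
    |F0 c e σ - F0 c e τ| ≤ (((c:ℝ)^2)⁻¹) ^ m := by
  have hb : 2 ≤ c^2 := by nlinarith
  set r : ℝ := ((c:ℝ)^2)⁻¹ with hr
  have hsσ := summable_dig hc he σ
  have hsτ := summable_dig hc he τ
  have hdig : ∀ j : ℕ, j < m → dig c e σ j = dig c e τ j := by
    intro j hj
    unfold dig
    rw [hagree (-(j:ℤ) - 1) (by omega) (by omega), hagree (j:ℤ) (by omega) (by omega)]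
  rw [F0, F0, ← Summable.tsum_sub hsσ hsτ]
  have habs : ∀ j : ℕ,
      |(dig c e σ j : ℝ) * r ^ (j+1) - (dig c e τ j : ℝ) * r ^ (j+1)|
        ≤ (if j < m then (0:ℝ) else ((c:ℝ)^2 - 1) * (r ^ (j+1))) := by
    intro j
    by_cases hj : j < m
    · rw [hdig j hj, sub_self, abs_zero, if_pos hj]
    · rw [if_neg hj, ← sub_mul, abs_mul, abs_of_nonneg (by positivity : (0:ℝ) ≤ r ^ (j+1))]
      refine mul_le_mul_of_nonneg_right ?_ (by positivity)
      rw [abs_sub_le_iff]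
      constructor
      · have h1 := dig_lt he σ j
        have h2 : (0:ℕ) ≤ dig c e τ j := Nat.zero_le _
        have : (dig c e σ j : ℝ) ≤ (c:ℝ)^2 - 1 := by
          have : dig c e σ j ≤ c^2 - 1 := by omega
          have h3 : ((dig c e σ j : ℕ) : ℝ) ≤ ((c^2 - 1 : ℕ) : ℝ) := by exact_mod_cast this
          rw [Nat.cast_sub (by omega)] at h3
          push_cast at h3
          linarith
        have h4 : (0:ℝ) ≤ (dig c e τ j : ℝ) := by positivity
        linarith
      · have h1 := dig_lt he τ j
        have : (dig c e τ j : ℝ) ≤ (c:ℝ)^2 - 1 := by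
          have : dig c e τ j ≤ c^2 - 1 := by omega
          have h3 : ((dig c e τ j : ℕ) : ℝ) ≤ ((c^2 - 1 : ℕ) : ℝ) := by exact_mod_cast this
          rw [Nat.cast_sub (by omega)] at h3
          push_cast at h3
          linarith
        have h4 : (0:ℝ) ≤ (dig c e σ j : ℝ) := by positivity
        linarith
  have hifsum : HasSum (fun j : ℕ => if j < m then (0:ℝ) else ((c:ℝ)^2 - 1) * (r ^ (j+1)))
      (r ^ m) := by
    have := tail_geom hb m
    push_cast at this
    exact this
  have hnorm : Summable (fun j : ℕ =>
      ‖(dig c e σ j : ℝ) * r ^ (j+1) - (dig c e τ j : ℝ) * r ^ (j+1)‖) :=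
    (hsσ.sub hsτ).abs
  calc |∑' j, ((dig c e σ j : ℝ) * r ^ (j+1) - (dig c e τ j : ℝ) * r ^ (j+1))|
      ≤ ∑' j, |(dig c e σ j : ℝ) * r ^ (j+1) - (dig c e τ j : ℝ) * r ^ (j+1)| := by
        exact norm_tsum_le_tsum_norm hnorm
    _ ≤ ∑' j, (if j < m then (0:ℝ) else ((c:ℝ)^2 - 1) * (r ^ (j+1))) :=
        Summable.tsum_le_tsum habs ((hsσ.sub hsτ).abs) hifsum.summable
    _ = r ^ m := hifsum.tsum_eq
end Dig


lemma exists_digits {b : ℕ} (hb : 2 ≤ b) {x : ℝ} (hx0 : 0 ≤ x) (hx1 : x < 1) :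
    ∃ w : ℕ → ℕ, (∀ j, w j < b) ∧
      HasSum (fun j : ℕ => (w j : ℝ) * ((b:ℝ)⁻¹) ^ (j+1)) x := by
  have hb1 : (1:ℝ) < b := by exact_mod_cast hb.trans_lt' one_lt_two
  have hb0 : (0:ℝ) < b := by linarith
  set r : ℝ := (b:ℝ)⁻¹ with hr
  have hr0 : 0 ≤ r := by positivity
  have hr1 : r < 1 := by rw [hr, inv_lt_one_iff₀]; right; exact hb1
  have hbr : (b:ℝ) * r = 1 := mul_inv_cancel₀ (by positivity)
  set fl : ℕ → ℤ := fun m => ⌊x * (b:ℝ) ^ m⌋ with hfl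
  have hfl0 : fl 0 = 0 := by
    simp only [hfl, pow_zero, mul_one]
    exact Int.floor_eq_zero_iff.2 ⟨hx0, hx1⟩
  have key : ∀ m : ℕ, (b:ℤ) * fl m ≤ fl (m+1) ∧ fl (m+1) < (b:ℤ) * fl m + b := by
    intro m
    constructor
    · rw [hfl, Int.le_floor]
      push_cast
      calc (b:ℝ) * ⌊x * (b:ℝ)^m⌋ ≤ (b:ℝ) * (x * (b:ℝ)^m) :=
            mul_le_mul_of_nonneg_left (Int.floor_le _) hb0.le
        _ = x * (b:ℝ)^(m+1) := by ring
    · rw [hfl, Int.floor_lt]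
      push_cast
      calc x * (b:ℝ)^(m+1) = (b:ℝ) * (x * (b:ℝ)^m) := by ring
        _ < (b:ℝ) * (⌊x * (b:ℝ)^m⌋ + 1) :=
            mul_lt_mul_of_pos_left (Int.lt_floor_add_one _) hb0
        _ = (b:ℝ) * ⌊x * (b:ℝ)^m⌋ + b := by ring
  set w : ℕ → ℕ := fun j => (fl (j+1) - (b:ℤ) * fl j).toNat with hw
  have hwlt : ∀ j, w j < b := by
    intro j
    have := key j
    show (fl (j+1) - (b:ℤ) * fl j).toNat < b
    omega
  have hcast : ∀ j, (w j : ℝ) = (fl (j+1) : ℝ) - (b:ℝ) * (fl j : ℝ) := by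
    intro j
    have h1 := (key j).1
    have h3 : ((w j : ℕ) : ℤ) = fl (j+1) - (b:ℤ) * fl j := by
      show (((fl (j+1) - (b:ℤ) * fl j).toNat : ℕ) : ℤ) = _
      omega
    have h4 : (((w j : ℕ) : ℤ) : ℝ) = ((fl (j+1) - (b:ℤ) * fl j : ℤ) : ℝ) := by rw [h3]
    push_cast at h4
    push_cast
    linarith
  have hS : ∀ m : ℕ, ∑ j ∈ Finset.range m, (w j : ℝ) * r ^ (j+1) = (fl m : ℝ) * r ^ m := by
    intro m
    induction m with
    | zero => simp [hfl0]
    | succ m ih =>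
      rw [Finset.sum_range_succ, ih, hcast m]
      have hrm : (b:ℝ) * r ^ (m+1) = r ^ m := by
        rw [pow_succ, ← mul_assoc, mul_comm (b:ℝ) (r^m), mul_assoc, hbr, mul_one]
      calc (fl m : ℝ) * r ^ m + ((fl (m+1) : ℝ) - (b:ℝ) * (fl m:ℝ)) * r ^ (m+1)
          = (fl (m+1) : ℝ) * r ^ (m+1) + (fl m : ℝ) * (r ^ m - (b:ℝ) * r ^ (m+1)) := by ring
        _ = (fl (m+1) : ℝ) * r ^ (m+1) := by rw [hrm]; ring
  have hbrm : ∀ m : ℕ, (b:ℝ)^m * r^m = 1 := by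
    intro m
    rw [← mul_pow, hbr, one_pow]
  have hlow : ∀ m : ℕ, x - r ^ m ≤ (fl m : ℝ) * r ^ m := by
    intro m
    have h1 : x * (b:ℝ)^m < (fl m : ℝ) + 1 := Int.lt_floor_add_one _
    have h2 : (x * (b:ℝ)^m) * r^m < ((fl m : ℝ) + 1) * r^m := by
      apply mul_lt_mul_of_pos_right h1
      positivity
    have h3 : (x * (b:ℝ)^m) * r^m = x := by rw [mul_assoc, hbrm, mul_one]
    nlinarith [h2, h3]
  have hhigh : ∀ m : ℕ, (fl m : ℝ) * r ^ m ≤ x := by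
    intro m
    have h1 : (fl m : ℝ) ≤ x * (b:ℝ)^m := Int.floor_le _
    have h2 : (fl m : ℝ) * r^m ≤ (x * (b:ℝ)^m) * r^m := by
      apply mul_le_mul_of_nonneg_right h1
      positivity
    rwa [mul_assoc, hbrm, mul_one] at h2
  have hsummable : Summable (fun j : ℕ => (w j : ℝ) * r ^ (j+1)) := by
    refine Summable.of_nonneg_of_le (fun j => by positivity) (fun j => ?_)
      ⟨_, tail_geom hb 0⟩
    simp only [if_neg (by omega : ¬ (j < 0))]
    have h1 : (w j : ℝ) ≤ (b:ℝ) - 1 := by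
      have := hwlt j
      have h2 : (w j : ℝ) ≤ ((b:ℝ) - 1) := by
        have : (w j : ℕ) ≤ b - 1 := by omega
        have h3 : ((w j : ℕ) : ℝ) ≤ ((b - 1 : ℕ) : ℝ) := by exact_mod_cast this
        rw [Nat.cast_sub (by omega)] at h3
        push_cast at h3
        linarith
      exact h2
    exact mul_le_mul_of_nonneg_right h1 (by positivity)
  have htendsto : Filter.Tendsto (fun m => ∑ j ∈ Finset.range m, (w j : ℝ) * r ^ (j+1))
      Filter.atTop (nhds x) := by
    have hx : Filter.Tendsto (fun m : ℕ => x - r ^ m) Filter.atTop (nhds x) := by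
      have := (tendsto_pow_atTop_nhds_zero_of_lt_one hr0 hr1)
      simpa using Filter.Tendsto.sub (tendsto_const_nhds (x := x)) this
    refine tendsto_of_tendsto_of_tendsto_of_le_of_le hx tendsto_const_nhds ?_ ?_
    · intro m
      have h5 := hlow m
      rw [← hS m] at h5
      exact h5
    · intro m
      have h5 := hhigh m
      rw [← hS m] at h5
      exact h5
  obtain ⟨L, hL⟩ := hsummable
  have : L = x := tendsto_nhds_unique hL.tendsto_sum_nat htendsto
  exact ⟨w, hwlt, this ▸ hL⟩


open scoped NNReal in
theorem dist_le_exp_iff {n : ℕ} (x y : X n) (m : ℕ) :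
    dist x y ≤ Real.exp (-(m:ℝ)) ↔ ball x m = ball y m := by
  rcases eq_or_ne x y with rfl | hne
  · constructor
    · intro _; rfl
    · intro _
      rw [dist_self]
      exact (Real.exp_pos _).le
  · rw [dist_eq_tdist, tdist_eq_of_ne hne, Real.exp_le_exp, neg_le_neg_iff, Nat.cast_le]
    constructor
    · intro h
      exact ball_mono_eq h
        (Nat.sSup_mem ⟨0, zero_mem_agreeSet x y⟩ (bddAbove_agreeSet hne))
    · intro h
      exact le_csSup (bddAbove_agreeSet hne) h

section Aux

variable {n : ℕ} {A : Type*}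

lemma ball_Phi (α : A → Fin n) (σ : ℤ → A) (S : X n) (lam : ℤ → FreeGroup (Fin n))
    (h0 : lam 0 = 1) (hstep : ∀ k : ℤ, lam (k + 1) = lam k * FreeGroup.of (α (σ k)))
    (hrange : S.1 = Set.range lam) (m : ℕ) :
    ball S m = lam '' {k : ℤ | k.natAbs ≤ m} := by
  have hw : ∀ k : ℤ, wlen (lam k) = k.natAbs := fun k => by
    rw [wlen, toWord_lam α σ lam h0 hstep k, length_W]
  ext g
  constructor
  · rintro ⟨hg, hlen⟩
    rw [hrange] at hg
    obtain ⟨k, rfl⟩ := hg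
    exact ⟨k, by rwa [Set.mem_setOf_eq, ← hw k], rfl⟩
  · rintro ⟨k, hk, rfl⟩
    exact ⟨by rw [hrange]; exact ⟨k, rfl⟩, by rw [hw k]; exact hk⟩

lemma ball_eq_iff_agree (hα : Function.Injective α) (σ τ : ℤ → A)
    (Sσ Sτ : X n) (lamσ lamτ : ℤ → FreeGroup (Fin n))
    (h0σ : lamσ 0 = 1) (hstepσ : ∀ k : ℤ, lamσ (k + 1) = lamσ k * FreeGroup.of (α (σ k)))
    (hrσ : Sσ.1 = Set.range lamσ)
    (h0τ : lamτ 0 = 1) (hstepτ : ∀ k : ℤ, lamτ (k + 1) = lamτ k * FreeGroup.of (α (τ k)))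
    (hrτ : Sτ.1 = Set.range lamτ) (m : ℕ) :
    ball Sσ m = ball Sτ m ↔ ∀ k : ℤ, -(m:ℤ) ≤ k → k < m → σ k = τ k := by
  have hwσ : ∀ k : ℤ, (lamσ k).toWord = W α σ k := toWord_lam α σ lamσ h0σ hstepσ
  have hwτ : ∀ k : ℤ, (lamτ k).toWord = W α τ k := toWord_lam α τ lamτ h0τ hstepτ
  rw [ball_Phi α σ Sσ lamσ h0σ hstepσ hrσ m, ball_Phi α τ Sτ lamτ h0τ hstepτ hrτ m]
  constructor
  · intro hball k hk1 hk2
    rcases le_or_gt 0 k with hk0 | hk0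
    · -- use the element lamσ (k+1)
      have hmem : lamσ (k+1) ∈ lamσ '' {j : ℤ | j.natAbs ≤ m} :=
        ⟨k+1, by simp only [Set.mem_setOf_eq]; omega, rfl⟩
      rw [hball] at hmem
      obtain ⟨j, hj, hje⟩ := hmem
      have hword : W α τ j = W α σ (k+1) := by rw [← hwσ, ← hwτ, hje]
      have hlen : j.natAbs = (k+1).natAbs := by
        rw [← length_W α τ j, ← length_W α σ (k+1), hword]
      rcases le_or_gt 0 j with hj0 | hj0
      · have hjk : j = k + 1 := by omega
        subst hjk
        have hWσ : W α σ (k+1) = (List.range (k+1).toNat).map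
            fun i : ℕ => (α (σ (i : ℤ)), true) := if_pos (by omega)
        have hWτ : W α τ (k+1) = (List.range (k+1).toNat).map
            fun i : ℕ => (α (τ (i : ℤ)), true) := if_pos (by omega)
        rw [hWσ, hWτ] at hword
        have hk' : k.toNat < (k+1).toNat := by omega
        have := map_range_eq_iff hword hk'
        have hc : ((k.toNat : ℕ) : ℤ) = k := by omega
        rw [hc] at this
        exact (hα (congrArg Prod.fst this.symm))
      · -- impossible: signs differ
        exfalso
        have hWσ : W α σ (k+1) = (List.range (k+1).toNat).map
            fun i : ℕ => (α (σ (i : ℤ)), true) := if_pos (by omega)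
        have hWτ : W α τ j = (List.range (-j).toNat).map
            fun i : ℕ => (α (τ (-1 - (i : ℤ))), false) := if_neg (by omega)
        rw [hWσ, hWτ] at hword
        have h0 : (0 : ℕ) < (-j).toNat := by omega
        have h0' : (0 : ℕ) < (k+1).toNat := by omega
        have h1 : ((List.range (-j).toNat).map
            (fun i : ℕ => (α (τ (-1 - (i : ℤ))), false)))[0]? =
            ((List.range (k+1).toNat).map
            (fun i : ℕ => (α (σ (i : ℤ)), true)))[0]? := by
          rw [hword]
        simp [List.getElem?_map, List.getElem?_range, h0, h0'] at h1
    · -- k < 0 : use the element lamσ k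
      have hmem : lamσ k ∈ lamσ '' {j : ℤ | j.natAbs ≤ m} :=
        ⟨k, by simp only [Set.mem_setOf_eq]; omega, rfl⟩
      rw [hball] at hmem
      obtain ⟨j, hj, hje⟩ := hmem
      have hword : W α τ j = W α σ k := by rw [← hwσ, ← hwτ, hje]
      have hlen : j.natAbs = k.natAbs := by
        rw [← length_W α τ j, ← length_W α σ k, hword]
      rcases le_or_gt 0 j with hj0 | hj0
      · exfalso
        have hWσ : W α σ k = (List.range (-k).toNat).map
            fun i : ℕ => (α (σ (-1 - (i : ℤ))), false) := if_neg (by omega)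
        have hWτ : W α τ j = (List.range j.toNat).map
            fun i : ℕ => (α (τ (i : ℤ)), true) := if_pos (by omega)
        rw [hWσ, hWτ] at hword
        have h0 : (0 : ℕ) < (-k).toNat := by omega
        have h0' : (0 : ℕ) < j.toNat := by omega
        have h1 : ((List.range j.toNat).map
            (fun i : ℕ => (α (τ (i : ℤ)), true)))[0]? =
            ((List.range (-k).toNat).map
            (fun i : ℕ => (α (σ (-1 - (i : ℤ))), false)))[0]? := by
          rw [hword]
        simp [List.getElem?_map, List.getElem?_range, h0, h0'] at h1
      · have hjk : j = k := by omega
        subst hjk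
        have hWσ : W α σ j = (List.range (-j).toNat).map
            fun i : ℕ => (α (σ (-1 - (i : ℤ))), false) := if_neg (by omega)
        have hWτ : W α τ j = (List.range (-j).toNat).map
            fun i : ℕ => (α (τ (-1 - (i : ℤ))), false) := if_neg (by omega)
        rw [hWσ, hWτ] at hword
        have hk' : (-1 - j).toNat < (-j).toNat := by omega
        have := map_range_eq_iff hword hk'
        have hc : -1 - (((-1 - j).toNat : ℕ) : ℤ) = j := by omega
        rw [hc] at this
        exact (hα (congrArg Prod.fst this)).symm
  · intro hagree
    have hW : ∀ k : ℤ, k.natAbs ≤ m → W α σ k = W α τ k := by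
      intro k hk
      unfold W
      split
      · refine List.map_congr_left fun i hi => ?_
        rw [List.mem_range] at hi
        have : σ (i : ℤ) = τ (i : ℤ) := hagree i (by omega) (by omega)
        rw [this]
      · refine List.map_congr_left fun i hi => ?_
        rw [List.mem_range] at hi
        have : σ (-1 - (i:ℤ)) = τ (-1 - (i:ℤ)) := hagree _ (by omega) (by omega)
        rw [this]
    have hlam : ∀ k : ℤ, k.natAbs ≤ m → lamσ k = lamτ k := by
      intro k hk
      rw [lam_eq_mk α σ lamσ h0σ hstepσ k, lam_eq_mk α τ lamτ h0τ hstepτ k, hW k hk]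
    ext g
    constructor
    · rintro ⟨k, hk, rfl⟩
      exact ⟨k, hk, (hlam k hk).symm⟩
    · rintro ⟨k, hk, rfl⟩
      exact ⟨k, hk, hlam k hk⟩

end Aux

open scoped NNReal
open MeasureTheory

/-- The image of the shift space `Σ = 𝒜^ℤ` in `X_n` has positive finite Hausdorff
dimension, which moreover coincides with both its lower and upper box dimensions. -/
theorem shift_image_dimensions (n : ℕ) (hn : 2 ≤ n) (A : Type) [Fintype A]
    [TopologicalSpace A] [DiscreteTopology A]
    (hA2 : 2 ≤ Fintype.card A) (hAn : Fintype.card A ≤ n)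
    (α : A → Fin n) (hα : Function.Injective α)
    (Φ : (ℤ → A) → X n)
    (hΦ : ∀ σ : ℤ → A, ∃ lam : ℤ → FreeGroup (Fin n),
      lam 0 = 1 ∧ (∀ k : ℤ, lam (k + 1) = lam k * FreeGroup.of (α (σ k))) ∧
      (Φ σ).1 = Set.range lam) :
    0 < dimH (Set.range Φ) ∧ dimH (Set.range Φ) < ⊤ ∧
    dimH (Set.range Φ) = lowerBox (Set.range Φ) ∧
    dimH (Set.range Φ) = upperBox (Set.range Φ) := by
  classical
  borelize (X n)
  choose lam h0 hstep hrangeΦ using hΦ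
  set Y : Set (X n) := Set.range Φ with hY
  set c : ℕ := Fintype.card A with hcdef
  have hc2 : 2 ≤ c := hA2
  have hc0 : 0 < c := by omega
  have hcR : (1:ℝ) < c := by exact_mod_cast hc2.trans_lt' one_lt_two
  -- agreement criterion
  have hiff : ∀ (σ τ : ℤ → A) (m : ℕ),
      ball (Φ σ) m = ball (Φ τ) m ↔ ∀ k : ℤ, -(m:ℤ) ≤ k → k < m → σ k = τ k := by
    intro σ τ m
    exact ball_eq_iff_agree hα σ τ (Φ σ) (Φ τ) (lam σ) (lam τ) (h0 σ) (hstep σ)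
      (hrangeΦ σ) (h0 τ) (hstep τ) (hrangeΦ τ) m
  have hinj : Function.Injective Φ := by
    intro σ τ h
    funext k
    have hb : ball (Φ σ) (k.natAbs + 1) = ball (Φ τ) (k.natAbs + 1) := by rw [h]
    exact (hiff σ τ _).1 hb k (by omega) (by omega)
  -- the exponent
  set d : ℝ := 2 * Real.log c with hddef
  have hd0 : 0 < d := by
    have := Real.log_pos hcR
    rw [hddef]; linarith
  -- the key real identity
  have hExp : ∀ m : ℕ, Real.exp (-(m:ℝ)) ^ d = (((c:ℝ)^2)⁻¹) ^ m := by
    intro m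
    have h1 : Real.exp (-(m:ℝ)) ^ d = Real.exp (-(m:ℝ) * d) := by
      rw [Real.rpow_def_of_pos (Real.exp_pos _), Real.log_exp]
    have h2 : (((c:ℝ)^2)⁻¹ : ℝ) ^ m = Real.exp ((m:ℝ) * Real.log (((c:ℝ)^2)⁻¹)) := by
      rw [Real.exp_nat_mul, Real.exp_log (by positivity)]
    rw [h1, h2]
    congr 1
    rw [Real.log_inv, Real.log_pow, hddef]
    push_cast
    ring
  -- the coding map
  set eA : A ≃ Fin c := Fintype.equivFin A with heA
  set e : A → ℕ := fun a => (eA a).val with he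
  have helt : ∀ a, e a < c := fun a => (eA a).2
  set f : X n → ℝ := Function.extend Φ (F0 c e) (fun _ => 0) with hf
  have hfΦ : ∀ σ, f (Φ σ) = F0 c e σ := fun σ => hinj.extend_apply _ _ _
  -- Hölder continuity of f on Y
  have hH : HolderOnWith 1 d.toNNReal f Y := by
    rintro x ⟨σ, rfl⟩ y ⟨τ, rfl⟩
    rcases eq_or_ne (Φ σ) (Φ τ) with hEq | hne
    · rw [hEq]
      simp
    · set M : ℕ := sSup (agreeSet (Φ σ) (Φ τ)) with hM
      have hdxy : dist (Φ σ) (Φ τ) = Real.exp (-(M:ℝ)) := by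
        rw [dist_eq_tdist, tdist_eq_of_ne hne]
      have hballM : ball (Φ σ) M = ball (Φ τ) M :=
        Nat.sSup_mem ⟨0, zero_mem_agreeSet _ _⟩ (bddAbove_agreeSet hne)
      have hagree := (hiff σ τ M).1 hballM
      have hF := F0_diff hc2 helt σ τ M hagree
      have hEdist : edist (f (Φ σ)) (f (Φ τ)) = ENNReal.ofReal |F0 c e σ - F0 c e τ| := by
        rw [hfΦ, hfΦ, edist_dist, Real.dist_eq]
      rw [hEdist, ENNReal.coe_one, one_mul]
      have hcoe : ((d.toNNReal : ℝ≥0) : ℝ) = d := Real.coe_toNNReal _ hd0.le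
      have hpos : 0 < dist (Φ σ) (Φ τ) := by
        rw [hdxy]; exact Real.exp_pos _
      have : edist (Φ σ) (Φ τ) ^ ((d.toNNReal : ℝ≥0) : ℝ)
          = ENNReal.ofReal (dist (Φ σ) (Φ τ) ^ d) := by
        rw [edist_dist, ← ENNReal.ofReal_rpow_of_pos hpos, hcoe]
      rw [this]
      apply ENNReal.ofReal_le_ofReal
      rw [hdxy, hExp M]
      exact hF
  -- surjectivity onto [0,1)
  have hsurj : Set.Ico (0:ℝ) 1 ⊆ f '' Y := by
    rintro x ⟨hx0, hx1⟩
    have hb2 : 2 ≤ c^2 := by nlinarith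
    obtain ⟨w, hwlt, hwsum⟩ := exists_digits hb2 hx0 hx1
    have hwc : ∀ j, w j / c < c := fun j => by
      rw [Nat.div_lt_iff_lt_mul hc0]
      have := hwlt j
      nlinarith [this]
    set σ : ℤ → A := fun k =>
      if hk : 0 ≤ k then eA.symm ⟨w k.toNat % c, Nat.mod_lt _ hc0⟩
      else eA.symm ⟨w (-k-1).toNat / c, hwc _⟩ with hσ
    have hdig : ∀ j : ℕ, dig c e σ j = w j := by
      intro j
      have h1 : σ (j:ℤ) = eA.symm ⟨w j % c, Nat.mod_lt _ hc0⟩ := by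
        simp only [hσ]
        rw [dif_pos (Int.ofNat_nonneg j), Int.toNat_natCast]
      have h2 : σ (-(j:ℤ)-1) = eA.symm ⟨w j / c, hwc _⟩ := by
        simp only [hσ]
        have hneg : ¬ (0 ≤ -(j:ℤ)-1) := by omega
        rw [dif_neg hneg]
        simp only [show (-(-(j:ℤ)-1)-1).toNat = j from by omega]
      show e (σ (-(j:ℤ) - 1)) * c + e (σ (j:ℤ)) = w j
      rw [h1, h2]
      simp only [he, Equiv.apply_symm_apply]
      rw [mul_comm]
      exact Nat.div_add_mod _ _
    refine ⟨Φ σ, ⟨σ, rfl⟩, ?_⟩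
    rw [hfΦ, F0]
    have : (fun j : ℕ => (dig c e σ j : ℝ) * (((c:ℝ)^2)⁻¹) ^ (j+1))
        = fun j : ℕ => (w j : ℝ) * (((c^2 : ℕ):ℝ)⁻¹) ^ (j+1) := by
      funext j
      rw [hdig j]
      push_cast
      ring
    rw [this]
    exact hwsum.tsum_eq
  -- dimension lower bound
  have hIco : dimH (Set.Ico (0:ℝ) 1) = 1 := by
    have hmem : Set.Ico (0:ℝ) 1 ∈ nhds (1/2 : ℝ) :=
      Ico_mem_nhds (by norm_num) (by norm_num)
    rw [Real.dimH_of_mem_nhds hmem]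
    simp
  have hdnn0 : d.toNNReal ≠ 0 := by
    simp only [ne_eq, Real.toNNReal_eq_zero, not_le]
    exact hd0
  have hge : ENNReal.ofReal d ≤ dimH Y := by
    have h1le : (1:ℝ≥0∞) ≤ dimH (f '' Y) := by
      rw [← hIco]
      exact dimH_mono hsurj
    have hup : dimH (f '' Y) ≤ dimH Y / d.toNNReal :=
      hH.dimH_image_le (by positivity)
    have h2 : (1:ℝ≥0∞) ≤ dimH Y / (d.toNNReal : ℝ≥0∞) := h1le.trans hup
    rw [ENNReal.le_div_iff_mul_le (Or.inl (by exact_mod_cast hdnn0))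
      (Or.inl ENNReal.coe_ne_top), one_mul] at h2
    rwa [ENNReal.ofReal]
  -- dimension upper bound : Hausdorff measures vanish above d
  have hcardJ : ∀ m : ℕ,
      Fintype.card (↥(Finset.Icc (-(m:ℤ)) ((m:ℤ)-1)) → A) = c ^ (2*m) := by
    intro m
    rw [Fintype.card_fun, Fintype.card_coe, Int.card_Icc, ← hcdef]
    congr 1
    omega
  have hzero : ∀ d' : ℝ, d < d' → μH[d'] Y = 0 := by
    intro d' hdd'
    have hd'0 : 0 < d' := hd0.trans hdd'
    set θ : ℝ := (c:ℝ)^2 * Real.exp (-d') with hθ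
    have hθ0 : 0 ≤ θ := by positivity
    have hc2exp : (c:ℝ)^2 = Real.exp d := by
      have h1 : Real.exp d = Real.exp (Real.log c) ^ (2:ℕ) := by
        rw [hddef, show (2:ℝ) * Real.log c = ((2:ℕ):ℝ) * Real.log c by norm_num,
          Real.exp_nat_mul]
      rw [h1, Real.exp_log (by positivity)]
    have hθ1 : θ < 1 := by
      rw [hθ, hc2exp, ← Real.exp_add]
      rw [Real.exp_lt_one_iff]
      linarith
    have hrt : Filter.Tendsto (fun m : ℕ => ENNReal.ofReal (Real.exp (-(m:ℝ))))
        Filter.atTop (nhds 0) := by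
      have h1 : Filter.Tendsto (fun m : ℕ => Real.exp (-(m:ℝ))) Filter.atTop (nhds 0) :=
        Real.tendsto_exp_atBot.comp
          (tendsto_neg_atTop_atBot.comp tendsto_natCast_atTop_atTop)
      simpa using ENNReal.tendsto_ofReal h1
    have hcover : μH[d'] Y ≤ Filter.liminf (fun m : ℕ =>
        ∑ ff : ↥(Finset.Icc (-(m:ℤ)) ((m:ℤ)-1)) → A,
          EMetric.diam (Φ '' {σ | ∀ k : ℤ, ∀ hk : k ∈ Finset.Icc (-(m:ℤ)) ((m:ℤ)-1),
            σ k = ff ⟨k, hk⟩}) ^ d') Filter.atTop := by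
      refine MeasureTheory.Measure.hausdorffMeasure_le_liminf_sum d' Y
        (fun m : ℕ => ENNReal.ofReal (Real.exp (-(m:ℝ)))) hrt _ ?_ ?_
      · refine Filter.Eventually.of_forall fun m => fun ff => ?_
        refine EMetric.diam_le ?_
        rintro x ⟨σ, hσmem, rfl⟩ y ⟨τ, hτmem, rfl⟩
        rw [edist_dist]
        apply ENNReal.ofReal_le_ofReal
        rw [dist_le_exp_iff, hiff]
        intro k h1 h2
        have hk : k ∈ Finset.Icc (-(m:ℤ)) ((m:ℤ)-1) := Finset.mem_Icc.2 ⟨h1, by omega⟩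
        rw [hσmem k hk, hτmem k hk]
      · refine Filter.Eventually.of_forall fun m => ?_
        rintro x ⟨σ, rfl⟩
        exact Set.mem_iUnion.2 ⟨fun j => σ j.val, ⟨σ, fun k hk => rfl, rfl⟩⟩
    have hbound : ∀ m : ℕ,
        (∑ ff : ↥(Finset.Icc (-(m:ℤ)) ((m:ℤ)-1)) → A,
          EMetric.diam (Φ '' {σ | ∀ k : ℤ, ∀ hk : k ∈ Finset.Icc (-(m:ℤ)) ((m:ℤ)-1),
            σ k = ff ⟨k, hk⟩}) ^ d') ≤ ENNReal.ofReal (θ ^ m) := by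
      intro m
      have hd1 : ∀ ff : ↥(Finset.Icc (-(m:ℤ)) ((m:ℤ)-1)) → A,
          EMetric.diam (Φ '' {σ | ∀ k : ℤ, ∀ hk : k ∈ Finset.Icc (-(m:ℤ)) ((m:ℤ)-1),
            σ k = ff ⟨k, hk⟩}) ≤ ENNReal.ofReal (Real.exp (-(m:ℝ))) := by
        intro ff
        refine EMetric.diam_le ?_
        rintro x ⟨σ, hσmem, rfl⟩ y ⟨τ, hτmem, rfl⟩
        rw [edist_dist]
        apply ENNReal.ofReal_le_ofReal
        rw [dist_le_exp_iff, hiff]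
        intro k h1 h2
        have hk : k ∈ Finset.Icc (-(m:ℤ)) ((m:ℤ)-1) := Finset.mem_Icc.2 ⟨h1, by omega⟩
        rw [hσmem k hk, hτmem k hk]
      calc (∑ ff : ↥(Finset.Icc (-(m:ℤ)) ((m:ℤ)-1)) → A,
          EMetric.diam (Φ '' {σ | ∀ k : ℤ, ∀ hk : k ∈ Finset.Icc (-(m:ℤ)) ((m:ℤ)-1),
            σ k = ff ⟨k, hk⟩}) ^ d')
          ≤ ∑ _ff : ↥(Finset.Icc (-(m:ℤ)) ((m:ℤ)-1)) → A,
            (ENNReal.ofReal (Real.exp (-(m:ℝ)))) ^ d' :=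
            Finset.sum_le_sum fun ff _ => ENNReal.rpow_le_rpow (hd1 ff) hd'0.le
        _ = (Fintype.card (↥(Finset.Icc (-(m:ℤ)) ((m:ℤ)-1)) → A) : ℝ≥0∞)
            * (ENNReal.ofReal (Real.exp (-(m:ℝ)))) ^ d' := by
            rw [Finset.sum_const, Finset.card_univ, nsmul_eq_mul]
        _ = ENNReal.ofReal (θ ^ m) := by
            rw [hcardJ m]
            rw [ENNReal.ofReal_rpow_of_pos (Real.exp_pos _)]
            have h2 : Real.exp (-(m:ℝ)) ^ d' = Real.exp (-d') ^ m := by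
              rw [Real.rpow_def_of_pos (Real.exp_pos _), Real.log_exp, ← Real.exp_nat_mul]
              congr 1
              ring
            rw [h2]
            have h3 : ((c ^ (2*m) : ℕ) : ℝ≥0∞) = ENNReal.ofReal ((c:ℝ) ^ (2*m)) := by
              rw [← ENNReal.ofReal_natCast]
              congr 1
              push_cast
              ring
            rw [h3, ← ENNReal.ofReal_mul (by positivity)]
            congr 1
            rw [hθ, mul_pow, ← pow_mul]
    have hliminf : Filter.liminf (fun m : ℕ => ENNReal.ofReal (θ ^ m)) Filter.atTop = 0 := by
      refine Filter.Tendsto.liminf_eq ?_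
      have h1 : Filter.Tendsto (fun m : ℕ => θ ^ m) Filter.atTop (nhds 0) :=
        tendsto_pow_atTop_nhds_zero_of_lt_one hθ0 hθ1
      simpa using ENNReal.tendsto_ofReal h1
    have : μH[d'] Y ≤ 0 := by
      refine hcover.trans ?_
      rw [← hliminf]
      exact Filter.liminf_le_liminf (Filter.Eventually.of_forall hbound)
    exact le_antisymm this zero_le
  have hle : dimH Y ≤ ENNReal.ofReal d := by
    refine dimH_le fun d' hd' => ?_
    by_contra hlt
    push_neg at hlt
    have hdd' : d < (d' : ℝ) := by
      rw [← ENNReal.ofReal_coe_nnreal] at hlt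
      exact (ENNReal.ofReal_lt_ofReal_iff_of_nonneg hd0.le).1 hlt
    rw [hzero _ hdd'] at hd'
    exact (by simp : (0:ℝ≥0∞) ≠ ∞) hd'
  have hdimH : dimH Y = ENNReal.ofReal d := le_antisymm hle hge
  -- counting patterns
  have hLam : ∀ m : ℕ, Lam Y m = c ^ (2*m) := by
    intro m
    haveI : Nonempty A := Fintype.card_pos_iff.mp (by omega)
    set J : Finset ℤ := Finset.Icc (-(m:ℤ)) ((m:ℤ)-1) with hJ
    set ext : (↥J → A) → (ℤ → A) := fun ff k =>
      if hk : k ∈ J then ff ⟨k, hk⟩ else Classical.arbitrary A with hext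
    have hrestr : ∀ (ff : ↥J → A) (k : ℤ) (hk : k ∈ J), ext ff k = ff ⟨k, hk⟩ := by
      intro ff k hk
      simp only [hext]
      rw [dif_pos hk]
    have hmemJ : ∀ k : ℤ, k ∈ J ↔ (-(m:ℤ) ≤ k ∧ k < m) := by
      intro k
      rw [hJ, Finset.mem_Icc]
      omega
    have hkey : ∀ σ : ℤ → A, ball (Φ σ) m = ball (Φ (ext fun j => σ j.val)) m := by
      intro σ
      rw [hiff]
      intro k h1 h2
      exact (hrestr (fun j => σ j.val) k ((hmemJ k).2 ⟨h1, h2⟩)).symm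
    have him : (fun S => ball S m) '' Y
        = (fun ff : ↥J → A => ball (Φ (ext ff)) m) '' Set.univ := by
      ext B
      constructor
      · rintro ⟨S, ⟨σ, rfl⟩, rfl⟩
        exact ⟨fun j => σ j.val, trivial, (hkey σ).symm⟩
      · rintro ⟨ff, -, rfl⟩
        exact ⟨Φ (ext ff), ⟨ext ff, rfl⟩, rfl⟩
    have hinj2 : Function.Injective (fun ff : ↥J → A => ball (Φ (ext ff)) m) := by
      intro f1 f2 h
      funext j
      have h3 := (hiff _ _ m).1 h j.val ((hmemJ j.val).1 j.2).1 ((hmemJ j.val).1 j.2).2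
      rwa [hrestr f1 j.val j.2, hrestr f2 j.val j.2] at h3
    have hcard : Fintype.card (↥J → A) = c ^ (2*m) := hcardJ m
    show ((fun S => ball S m) '' Y).ncard = c ^ (2*m)
    rw [him, Set.ncard_image_of_injective _ hinj2, Set.ncard_univ,
      Nat.card_eq_fintype_card, hcard]
  -- box dimensions
  have hevent : ∀ᶠ m : ℕ in Filter.atTop,
      ENNReal.ofReal (Real.log (Lam Y m)) / (m : ℝ≥0∞) = ENNReal.ofReal d := by
    filter_upwards [Filter.eventually_ge_atTop 1] with m hm
    rw [hLam m]
    have hlog : Real.log ((c ^ (2*m) : ℕ) : ℝ) = (m:ℝ) * d := by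
      push_cast
      rw [Real.log_pow, hddef]
      push_cast
      ring
    rw [hlog, ENNReal.ofReal_mul (by positivity), ENNReal.ofReal_natCast,
      mul_comm, mul_div_assoc, ENNReal.div_self (by exact_mod_cast (by omega : m ≠ 0))
        (ENNReal.natCast_ne_top m), mul_one]
  have hlower : lowerBox Y = ENNReal.ofReal d := by
    rw [lowerBox, Filter.liminf_congr hevent, Filter.liminf_const]
  have hupper : upperBox Y = ENNReal.ofReal d := by
    rw [upperBox, Filter.limsup_congr hevent, Filter.limsup_const]
  refine ⟨?_, ?_, ?_, ?_⟩
  · rw [hdimH]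
    exact ENNReal.ofReal_pos.2 hd0
  · rw [hdimH]
    exact ENNReal.ofReal_lt_top
  · rw [hdimH, hlower]
  · rw [hdimH, hupper]

end GraphTrees
end
end
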